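/- arXiv:math/0308069 — 5 statements merged into one kernel-verified Lean document; each statement's English description precedes it below -/
import Mathlib

section
/- Let k be an infinite field of characteristic zero (or of characteristic p not dividing #G), let G be a finite group, and let V be a kG-submodule of the regular representation kG on which G acts faithfully. Then there exists α ∈ V such that V = (kG)·α and the stabilizer of α in G is trivial. -/
open MonoidAlgebra Polynomial

section aux
variable {k A : Type*} [Field k] [Ring A] [Nontrivial A] [Algebra k A] [Module.Finite k A]

lemma aux_isUnit_sub_algebraMap (a : A) (lam : k) (h : (minpoly k a).eval lam ≠ 0) :
    IsUnit (a - algebraMap k A lam) := by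
  have hint : IsIntegral k a := Algebra.IsIntegral.isIntegral a
  set p := minpoly k a with hp
  obtain ⟨q, hq⟩ : (X - C lam) ∣ (p - C (p.eval lam)) := by
    simpa using X_sub_C_dvd_sub_C_eval (a := lam) (p := p)
  have haev : aeval a p = 0 := minpoly.aeval k a
  have h1 : (a - algebraMap k A lam) * aeval a q = - algebraMap k A (p.eval lam) := by
    have := congrArg (aeval a) hq
    simp only [map_sub, aeval_X, aeval_C, map_mul, haev, zero_sub] at this
    exact this.symm
  have h2 : aeval a q * (a - algebraMap k A lam) = - algebraMap k A (p.eval lam) := by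
    have hq' : p - C (p.eval lam) = q * (X - C lam) := by rw [hq, mul_comm]
    have := congrArg (aeval a) hq'
    simp only [map_sub, aeval_X, aeval_C, map_mul, haev, zero_sub] at this
    exact this.symm
  refine ⟨⟨a - algebraMap k A lam, (-(p.eval lam)⁻¹) • aeval a q, ?_, ?_⟩, rfl⟩
  · rw [mul_smul_comm, h1, smul_neg, neg_smul, neg_neg, Algebra.smul_def, ← map_mul,
      inv_mul_cancel₀ h, map_one]
  · rw [smul_mul_assoc, h2, smul_neg, neg_smul, neg_neg, Algebra.smul_def, ← map_mul,
      inv_mul_cancel₀ h, map_one]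

lemma aux_finite_nonunit (a : A) : {t : k | ¬ IsUnit (1 + t • a)}.Finite := by
  have hne : minpoly k a ≠ 0 := minpoly.ne_zero (Algebra.IsIntegral.isIntegral a)
  apply Set.Finite.subset
    (((Polynomial.finite_setOf_isRoot hne).image (fun r => -r⁻¹)).insert 0)
  intro t ht
  simp only [Set.mem_setOf_eq] at ht
  rcases eq_or_ne t 0 with h0 | h0
  · exact Set.mem_insert_iff.mpr (Or.inl h0)
  · right
    refine ⟨-t⁻¹, ?_, by simp [inv_neg]⟩
    by_contra hroot
    apply ht
    have : IsUnit (a - algebraMap k A (-t⁻¹)) := aux_isUnit_sub_algebraMap a _ hroot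
    have key : 1 + t • a = t • (a - algebraMap k A (-t⁻¹)) := by
      rw [smul_sub, Algebra.smul_def t (algebraMap k A (-t⁻¹)), ← map_mul]
      rw [mul_neg, mul_inv_cancel₀ h0]
      simp [add_comm]
    rw [key, Algebra.smul_def]
    exact (IsUnit.map (algebraMap k A) (isUnit_iff_ne_zero.mpr h0)).mul this

end aux

/-- If `k` is an infinite field whose characteristic does not divide `#G`
(e.g. characteristic zero), and `V` is a `kG`-submodule of the regular
representation `kG` on which `G` acts faithfully, then `V` is generated as a
`kG`-module by a single element `α` whose stabilizer in `G` is trivial. -/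
theorem stmt_1 {k : Type*} [Field k] [Infinite k] {G : Type*} [Group G] [Fintype G]
    (hchar : ringChar k = 0 ∨ ¬ (ringChar k ∣ Fintype.card G))
    (V : Submodule (MonoidAlgebra k G) (MonoidAlgebra k G))
    (hfaith : ∀ g : G, (∀ v ∈ V, MonoidAlgebra.of k G g * v = v) → g = 1) :
    ∃ α ∈ V, Submodule.span (MonoidAlgebra k G) {α} = V ∧
      ∀ g : G, MonoidAlgebra.of k G g * α = α → g = 1 := by
  classical
  set A := MonoidAlgebra k G with hA
  haveI : Module.Finite k A := Module.Finite.equiv (MonoidAlgebra.coeffLinearEquiv (M := G) (S := k) k).symm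
  -- the cardinality of G is invertible in k
  have hcard : (Fintype.card G : k) ≠ 0 := by
    intro h
    rw [CharP.cast_eq_zero_iff k (ringChar k)] at h
    rcases hchar with h0 | hdvd
    · rw [h0, zero_dvd_iff] at h
      exact absurd h Fintype.card_ne_zero
    · exact hdvd h
  -- a k-linear projection onto V
  obtain ⟨W, hW⟩ := Submodule.exists_isCompl (V.restrictScalars k)
  let p0 : A →ₗ[k] A :=
    (V.restrictScalars k).subtype ∘ₗ (V.restrictScalars k).linearProjOfIsCompl W hW
  have p0mem : ∀ x : A, p0 x ∈ V := fun x =>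
    ((V.restrictScalars k).linearProjOfIsCompl W hW x).2
  have p0id : ∀ v ∈ V, p0 v = v := fun v hv => by
    simp only [p0, LinearMap.comp_apply, Submodule.coe_subtype]
    exact congrArg Subtype.val (Submodule.linearProjOfIsCompl_apply_left hW ⟨v, hv⟩)
  -- the averaged projection
  let f : A →ₗ[k] A := (Fintype.card G : k)⁻¹ •
    ∑ g : G, (LinearMap.mulLeft k (single g⁻¹ (1:k))) ∘ₗ p0 ∘ₗ
      (LinearMap.mulLeft k (single g (1:k)))
  have fapply : ∀ x : A, f x = (Fintype.card G : k)⁻¹ •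
      ∑ g : G, single g⁻¹ (1:k) * p0 (single g (1:k) * x) := by
    intro x
    simp [f, LinearMap.sum_apply]
  have fmem : ∀ x : A, f x ∈ V := by
    intro x
    rw [fapply]
    have : ∀ g : G, single g⁻¹ (1:k) * p0 (single g (1:k) * x) ∈ V := fun g => by
      have := V.smul_mem (single g⁻¹ (1:k)) (p0mem (single g (1:k) * x))
      rwa [smul_eq_mul] at this
    have hsum : (∑ g : G, single g⁻¹ (1:k) * p0 (single g (1:k) * x)) ∈ V :=
      Submodule.sum_mem V fun g _ => this g
    have := V.smul_mem (algebraMap k A (Fintype.card G : k)⁻¹) hsum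
    rwa [smul_eq_mul, ← Algebra.smul_def] at this
  have fid : ∀ v ∈ V, f v = v := by
    intro v hv
    rw [fapply]
    have hterm : ∀ g : G, single g⁻¹ (1:k) * p0 (single g (1:k) * v) = v := by
      intro g
      have hgv : single g (1:k) * v ∈ V := by
        have := V.smul_mem (single g (1:k)) hv; rwa [smul_eq_mul] at this
      rw [p0id _ hgv, ← mul_assoc, single_mul_single, inv_mul_cancel, mul_one, ← one_def, one_mul]
    rw [Finset.sum_congr rfl fun g _ => hterm g]
    rw [Finset.sum_const, Finset.card_univ, ← Nat.cast_smul_eq_nsmul k, smul_smul,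
      inv_mul_cancel₀ hcard, one_smul]
  -- equivariance
  have hequiv : ∀ (g : G) (x : A),
      f (single g (1:k) • x) = single g (1:k) • f x := by
    intro h x
    rw [smul_eq_mul, smul_eq_mul, fapply, fapply, mul_smul_comm, Finset.mul_sum]
    congr 1
    refine Fintype.sum_equiv (Equiv.mulRight h) _ _ fun g => ?_
    simp only [Equiv.coe_mulRight]
    simp only [← mul_assoc, single_mul_single, mul_one, mul_inv_rev, mul_inv_cancel,
      one_mul, mul_inv_cancel_left]
  let π : A →ₗ[A] A := MonoidAlgebra.equivariantOfLinearOfComm f hequiv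
  have πapply : ∀ x : A, π x = f x := fun x => rfl
  set α₀ : A := f 1 with hα₀
  have hα₀V : α₀ ∈ V := fmem 1
  have hgen : ∀ v ∈ V, v * α₀ = v := by
    intro v hv
    have : π (v • (1:A)) = v • π 1 := π.map_smul v 1
    rw [smul_eq_mul, mul_one, smul_eq_mul] at this
    rw [πapply, πapply] at this
    rw [← hα₀] at this
    rw [← this, fid v hv]
  -- fixed-point subspaces
  let S : G → Submodule k A := fun g => LinearMap.ker
    ((LinearMap.mulLeft k (single g (1:k) - 1)) ∘ₗ (LinearMap.mulRight k α₀))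
  have Smem : ∀ (g : G) (x : A), x ∈ S g ↔ (single g (1:k) - 1) * (x * α₀) = 0 := fun g x => by
    simp [S, LinearMap.mem_ker]
  have Sne : ∀ g : G, g ≠ 1 → S g ≠ ⊤ := by
    intro g hg htop
    apply hg
    apply hfaith
    intro v hv
    have hx : v ∈ S g := htop ▸ Submodule.mem_top
    rw [Smem, hgen v hv, sub_mul, one_mul, sub_eq_zero] at hx
    rw [MonoidAlgebra.of_apply]
    exact hx
  -- choose a direction avoiding all the fixed-point subspaces
  obtain ⟨xbar, hxbar⟩ : ∃ x : A, ∀ g : G, g ≠ 1 → x ∉ S g := by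
    by_contra hcon
    push_neg at hcon
    have hcover : ⋃ p ∈ (Finset.univ.erase (1:G)).image S, (p : Set A) = Set.univ := by
      ext x
      simp only [Set.mem_iUnion, Set.mem_univ, iff_true]
      obtain ⟨g, hg, hx⟩ := hcon x
      exact ⟨S g, Finset.mem_image_of_mem S (by simp [hg]), hx⟩
    have htopmem := Subspace.top_mem_of_biUnion_eq_univ hcover
    obtain ⟨g, hg, hSg⟩ := Finset.mem_image.mp htopmem
    exact Sne g (by simpa using (Finset.mem_erase.mp hg).1) hSg
  -- the set of bad parameters is finite
  have hfin : ({t : k | ¬ IsUnit (1 + t • xbar)} ∪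
      ⋃ g ∈ {g : G | g ≠ 1},
        {t : k | (single g (1:k) - 1) * ((1 + t • xbar) * α₀) = 0}).Finite := by
    apply Set.Finite.union (aux_finite_nonunit xbar)
    apply Set.Finite.biUnion (Set.toFinite _)
    intro g hg
    apply Set.Subsingleton.finite
    have hc : (single g (1:k) - 1) * (xbar * α₀) ≠ 0 := by
      intro h0
      exact hxbar g hg ((Smem g xbar).mpr h0)
    have hexp : ∀ t : k, (single g (1:k) - 1) * ((1 + t • xbar) * α₀) =
        (single g (1:k) - 1) * α₀ + t • ((single g (1:k) - 1) * (xbar * α₀)) := by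
      intro t
      rw [add_mul, one_mul, smul_mul_assoc, mul_add, mul_smul_comm]
    intro t1 h1 t2 h2
    simp only [Set.mem_setOf_eq, hexp] at h1 h2
    have heq : t1 • ((single g (1:k) - 1) * (xbar * α₀)) =
        t2 • ((single g (1:k) - 1) * (xbar * α₀)) := add_left_cancel (h1.trans h2.symm)
    have hzero : (t1 - t2) • ((single g (1:k) - 1) * (xbar * α₀)) = 0 := by
      rw [sub_smul, heq, sub_self]
    rcases smul_eq_zero.mp hzero with h | h
    · exact sub_eq_zero.mp h
    · exact absurd h hc
  -- pick a good parameter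
  obtain ⟨t, ht⟩ := hfin.infinite_compl.nonempty
  simp only [Set.mem_compl_iff, Set.mem_union, not_or, Set.mem_iUnion, not_exists] at ht
  obtain ⟨htu, htfix⟩ := ht
  set u : A := 1 + t • xbar with hu_def
  have hu : IsUnit u := not_not.mp htu
  have hstab : ∀ g : G, g ≠ 1 → (single g (1:k) - 1) * (u * α₀) ≠ 0 := by
    intro g hg h0
    exact htfix g hg h0
  obtain ⟨uu, huu⟩ := hu
  refine ⟨u * α₀, ?_, ?_, ?_⟩
  · have := V.smul_mem u hα₀V
    rwa [smul_eq_mul] at this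
  · apply le_antisymm
    · rw [Submodule.span_le, Set.singleton_subset_iff]
      have := V.smul_mem u hα₀V
      rwa [smul_eq_mul] at this
    · intro v hv
      rw [Submodule.mem_span_singleton]
      refine ⟨v * ↑uu⁻¹, ?_⟩
      rw [smul_eq_mul, mul_assoc, ← mul_assoc ((↑uu⁻¹ : A)) u α₀, ← huu, Units.inv_mul,
        one_mul, hgen v hv]
  · intro g hgα
    by_contra hg
    apply hstab g hg
    rw [sub_mul, one_mul, sub_eq_zero]
    rw [MonoidAlgebra.of_apply] at hgα
    rw [← mul_assoc] at hgα ⊢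
    exact hgα
end

section
/- Let k be a field of characteristic 0, G a finite group with G = Gal(K/k) for some Galois extension K/k, and suppose the regular representation of G over k contains a faithful n-dimensional subrepresentation. Then there exists α ∈ K with conjugate dimension n(α) = n and degree d(α) = [K:k] = #G over k. -/
open Polynomial

section Aux

variable {kk : Type*} [Field kk]

/-- Pencil lemma: if `g` is surjective then `f + t • g` is surjective for all but
finitely many `t`. -/
lemma pencil_finite {A B : Type*} [AddCommGroup A] [Module kk A]
    [AddCommGroup B] [Module kk B] [FiniteDimensional kk B]
    (f g : A →ₗ[kk] B) (hg : Function.Surjective g) :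
    {t : kk | ¬ Function.Surjective (f + t • g)}.Finite := by
  obtain ⟨s, hs⟩ := g.exists_rightInverse_of_surjective (LinearMap.range_eq_top.2 hg)
  set C : Module.End kk B := f ∘ₗ s with hC
  have key : ∀ t : kk, ¬ Function.Surjective (f + t • g) → Module.End.HasEigenvalue C (-t) := by
    intro t ht
    have hcomp : ∀ b : B, (f + t • g) (s b) = C b + t • b := by
      intro b
      have hgs : g (s b) = b := DFunLike.congr_fun hs b
      simp [hC, hgs]
    have hns : ¬ Function.Surjective (C + t • (LinearMap.id : B →ₗ[kk] B)) := by
      intro hsurj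
      apply ht
      intro b
      obtain ⟨b', hb'⟩ := hsurj b
      refine ⟨s b', ?_⟩
      rw [hcomp]
      simpa using hb'
    have hni : ¬ Function.Injective (C + t • (LinearMap.id : B →ₗ[kk] B)) := fun h =>
      hns ((LinearMap.injective_iff_surjective).mp h)
    rw [← LinearMap.ker_eq_bot] at hni
    obtain ⟨x, hx, hx0⟩ := (Submodule.ne_bot_iff _).mp hni
    have hCx : C x = (-t) • x := by
      have := hx
      rw [LinearMap.mem_ker, LinearMap.add_apply, LinearMap.smul_apply, LinearMap.id_apply] at this
      rw [neg_smul]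
      exact eq_neg_of_add_eq_zero_left this
    exact Module.End.hasEigenvalue_of_hasEigenvector (Module.End.hasEigenvector_iff.2 ⟨Module.End.mem_eigenspace_iff.2 hCx, hx0⟩)
  have hsub : {t : kk | ¬ Function.Surjective (f + t • g)} ⊆
      Neg.neg ⁻¹' {μ | Module.End.HasEigenvalue C μ} := fun t ht => key t ht
  exact ((Module.End.finite_hasEigenvalue C).preimage neg_injective.injOn).subset hsub

/-- A vector space over an infinite field is not a finite union of proper subspaces. -/
lemma exists_avoid {M ι : Type*} [Infinite kk] [AddCommGroup M] [Module kk M] [Finite ι]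
    (W : ι → Submodule kk M) (hW : ∀ i, W i ≠ ⊤) : ∃ x : M, ∀ i, x ∉ W i := by
  cases nonempty_fintype ι
  classical
  have hne : ⋃ p ∈ Finset.image W Finset.univ, (p : Set M) ≠ Set.univ :=
    Subspace.biUnion_ne_univ_of_top_notMem (by
      simp only [Finset.mem_image, Finset.mem_univ, true_and]
      rintro ⟨i, hi⟩
      exact hW i hi)
  obtain ⟨x, hx⟩ := (Set.ne_univ_iff_exists_notMem _).mp hne
  refine ⟨x, fun i hi => hx ?_⟩
  simp only [Set.mem_iUnion]
  exact ⟨W i, ⟨Finset.mem_image_of_mem W (Finset.mem_univ i), hi⟩⟩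

end Aux

set_option maxHeartbeats 1000000 in
/-- If `K/k` is a Galois extension of fields of characteristic zero with group
`G = Gal(K/k)`, and the regular representation `kG` contains a `G`-stable
`k`-subspace `V` of dimension `n` on which `G` acts faithfully, then there is
`α ∈ K` of conjugate dimension `n` and degree `[K:k] = #G` over `k`. -/
theorem stmt_3 {k K : Type*} [Field k] [CharZero k] [Field K] [Algebra k K]
    [FiniteDimensional k K] [IsGalois k K] (n : ℕ)
    (V : Submodule k (MonoidAlgebra k (K ≃ₐ[k] K)))
    (hstable : ∀ g : K ≃ₐ[k] K, ∀ x ∈ V, MonoidAlgebra.of k (K ≃ₐ[k] K) g * x ∈ V)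
    (hdim : Module.finrank k V = n)
    (hfaith : ∀ g : K ≃ₐ[k] K,
      (∀ x ∈ V, MonoidAlgebra.of k (K ≃ₐ[k] K) g * x = x) → g = 1) :
    ∃ α : K, Module.finrank k (Submodule.span k ((minpoly k α).rootSet K)) = n ∧
      (minpoly k α).natDegree = Module.finrank k K ∧
      Module.finrank k K = Nat.card (K ≃ₐ[k] K) := by
  classical
  letI : Fintype (K ≃ₐ[k] K) := AlgEquiv.fintype k K
  have hcard : Fintype.card (K ≃ₐ[k] K) = Module.finrank k K := by
    rw [← Nat.card_eq_fintype_card]; exact IsGalois.card_aut_eq_finrank k K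
  -- ## Part 1 : a normal-basis-type element θ whose conjugates are linearly independent
  obtain ⟨c, hc⟩ := Field.exists_primitive_element k K
  have hstabc : ∀ σ : K ≃ₐ[k] K, σ c = c → σ = 1 := by
    intro σ hσ
    refine AlgEquiv.ext fun x => ?_
    have hx : x ∈ IntermediateField.adjoin k ({c} : Set K) := by rw [hc]; trivial
    have : σ x = x := by
      refine IntermediateField.adjoin_induction k (p := fun y _ => σ y = y)
        (fun y hy => ?_) (fun y => σ.commutes y)
        (fun y z _ _ hy hz => by
          show σ (y + z) = y + z
          rw [map_add, show σ y = y from hy, show σ z = z from hz])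
        (fun y _ hy => by
          show σ y⁻¹ = y⁻¹
          rw [map_inv₀, show σ y = y from hy])
        (fun y z _ _ hy hz => by
          show σ (y * z) = y * z
          rw [map_mul, show σ y = y from hy, show σ z = z from hz]) hx
      rw [Set.mem_singleton_iff] at hy
      rw [hy]; exact hσ
    simpa using this
  set f : k[X] := minpoly k c with hf
  set fK : K[X] := f.map (algebraMap k K) with hfK
  have hrootc : fK.IsRoot c := by
    rw [IsRoot, eval_map, ← aeval_def]; exact minpoly.aeval k c
  set h : K[X] := fK /ₘ (X - C c) with hh
  have hfac : (X - C c) * h = fK := (mul_divByMonic_eq_iff_isRoot).2 hrootc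
  have hc0 : h.eval c ≠ 0 := by
    have h1 : fK.derivative.eval c = h.eval c := by
      conv_lhs => rw [← hfac]
      rw [derivative_mul, derivative_sub, derivative_X, derivative_C, sub_zero, one_mul,
        eval_add, eval_mul, eval_sub, eval_X, eval_C, sub_self, zero_mul, add_zero]
    obtain ⟨A, B, hAB⟩ := Algebra.IsSeparable.isSeparable k c
    have hone := congrArg (aeval c) hAB
    rw [map_add, map_mul, map_mul, map_one, minpoly.aeval, mul_zero, zero_add] at hone
    intro h0
    rw [← h1, hfK, derivative_map, eval_map, ← aeval_def] at h0
    rw [← hf, h0, mul_zero] at hone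
    exact one_ne_zero hone.symm
  have hval0 : ∀ σ : K ≃ₐ[k] K, σ ≠ 1 → h.eval (σ c) = 0 := by
    intro σ hσ
    have hr : fK.eval (σ c) = 0 := by
      rw [eval_map, ← aeval_def]
      have h2 := Polynomial.aeval_algHom_apply σ.toAlgHom c f
      rw [minpoly.aeval, map_zero] at h2
      exact h2
    have : (σ c - c) * h.eval (σ c) = 0 := by
      rw [← hr]
      conv_rhs => rw [← hfac]
      rw [eval_mul, eval_sub, eval_X, eval_C]
    rcases mul_eq_zero.mp this with h1 | h2
    · exact absurd (hstabc σ (sub_eq_zero.mp h1)) hσ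
    · exact h2
  -- ring hom attached to an automorphism
  set rh : (K ≃ₐ[k] K) → (K →+* K) := fun σ => σ.toAlgHom.toRingHom with hrh
  have hev : ∀ (p : K[X]) (σ : K ≃ₐ[k] K) (y : K), (p.map (rh σ)).eval (σ y) = σ (p.eval y) := by
    intro p σ y
    rw [eval_map]
    exact Polynomial.eval₂_at_apply (rh σ) y
  have hmapmul : ∀ (p : K[X]) (σ τ : K ≃ₐ[k] K),
      (p.map (rh τ)).map (rh σ) = p.map (rh (σ * τ)) := by
    intro p σ τ
    rw [Polynomial.map_map]
    rfl
  have hpol_at_c : ∀ τ : K ≃ₐ[k] K, (h.map (rh τ)).eval c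
      = if τ = 1 then h.eval c else 0 := by
    intro τ
    have hcc : c = τ (τ⁻¹ c) := by
      rw [← AlgEquiv.mul_apply, mul_inv_cancel, AlgEquiv.one_apply]
    conv_lhs => rw [hcc]
    rw [hev]
    by_cases h1 : τ = 1
    · rw [h1]
      simp
    · have hne : τ⁻¹ ≠ 1 := fun habs => h1 (by rw [← inv_inv τ, habs, inv_one])
      rw [show τ⁻¹ c = τ⁻¹ c from rfl, hval0 τ⁻¹ hne, map_zero, if_neg h1]
  -- the Artin determinant polynomial
  set Mp : Matrix (K ≃ₐ[k] K) (K ≃ₐ[k] K) K[X] := fun i j => h.map (rh (i * j)) with hMp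
  set D : K[X] := Mp.det with hD
  have hDc : D.eval c ≠ 0 := by
    have hmapdet : D.eval c = (Mp.map (eval c)).det := by
      rw [hD]
      exact (Polynomial.evalRingHom c).map_det Mp
    have hentry : Mp.map (eval c) = (h.eval c) •
        ((1 : Matrix (K ≃ₐ[k] K) (K ≃ₐ[k] K) K).submatrix id (fun j => j⁻¹)) := by
      ext i j
      simp only [Matrix.map_apply, hMp, Matrix.smul_apply, Matrix.submatrix_apply, id_eq,
        Matrix.one_apply, smul_eq_mul, mul_ite, mul_one, mul_zero]
      show eval c (h.map (rh (i * j))) = _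
      rw [hpol_at_c (i * j)]
      congr 1
      rw [eq_comm, mul_eq_one_iff_eq_inv, eq_comm]
    rw [hmapdet, hentry, Matrix.det_smul]
    have hperm : ((1 : Matrix (K ≃ₐ[k] K) (K ≃ₐ[k] K) K).submatrix id (fun j => j⁻¹)).det
        = (Equiv.Perm.sign (Equiv.inv (K ≃ₐ[k] K)) : ℤ) := by
      have := Matrix.det_permute' (Equiv.inv (K ≃ₐ[k] K))
        (1 : Matrix (K ≃ₐ[k] K) (K ≃ₐ[k] K) K)
      simpa using this
    rw [hperm]
    apply mul_ne_zero (pow_ne_zero _ hc0)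
    rcases Int.units_eq_one_or (Equiv.Perm.sign (Equiv.inv (K ≃ₐ[k] K))) with hs | hs <;>
      rw [hs] <;> norm_num
  have hDne : D ≠ 0 := fun h0 => hDc (by rw [h0, eval_zero])
  -- choose a rational point where the determinant is nonzero
  have hfinroots : ({x : K | D.IsRoot x}).Finite := Polynomial.finite_setOf_isRoot hDne
  have hfin2 : ((algebraMap k K) ⁻¹' {x : K | D.IsRoot x}).Finite :=
    hfinroots.preimage (algebraMap k K).injective.injOn
  obtain ⟨a, ha⟩ := hfin2.infinite_compl.nonempty
  set xa : K := algebraMap k K a with hxa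
  have hfix : ∀ σ : K ≃ₐ[k] K, σ xa = xa := fun σ => σ.commutes a
  have hconj : ∀ (p : K[X]) (σ : K ≃ₐ[k] K), σ (p.eval xa) = (p.map (rh σ)).eval xa := by
    intro p σ
    conv_rhs => rw [← hfix σ]
    rw [hev]
  set N : Matrix (K ≃ₐ[k] K) (K ≃ₐ[k] K) K := fun i j => (h.map (rh (i * j))).eval xa with hN
  have hdetN : N.det ≠ 0 := by
    have : D.eval xa = N.det := by
      rw [hD]
      have := (Polynomial.evalRingHom xa).map_det Mp
      exact this
    rw [← this]
    exact fun h0 => ha h0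
  -- θ and the linear map L sending a group-algebra element x to x ⬝ θ
  set θ : K := h.eval xa with hθ
  set L : MonoidAlgebra k (K ≃ₐ[k] K) →ₗ[k] K :=
    Finsupp.linearCombination k (fun σ : K ≃ₐ[k] K => σ θ) ∘ₗ
      (MonoidAlgebra.coeffLinearEquiv k).toLinearMap with hL
  have hL_single : ∀ (g : K ≃ₐ[k] K) (c' : k),
      L (MonoidAlgebra.single g c') = c' • g θ := by
    intro g c'
    exact Finsupp.linearCombination_single k c' g
  have hL_zero : ∀ x : MonoidAlgebra k (K ≃ₐ[k] K), L x = 0 → x = 0 := by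
    intro x hx
    have hsum : ∀ i : K ≃ₐ[k] K,
        (N.mulVec (fun j => algebraMap k K (x.coeff j))) i = 0 := by
      intro i
      have h1 : L x = ∑ j : K ≃ₐ[k] K, x.coeff j • (j θ) :=
        (Finsupp.linearCombination_apply k x.coeff).trans
          (Finsupp.sum_fintype _ _ (fun j => zero_smul k _))
      have h2 : i (∑ j : K ≃ₐ[k] K, x.coeff j • (j θ)) = 0 := by
        rw [← h1, hx, map_zero]
      rw [map_sum] at h2
      have h3 : ∀ j : K ≃ₐ[k] K, i (x.coeff j • (j θ)) = N i j * algebraMap k K (x.coeff j) := by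
        intro j
        rw [map_smul, Algebra.smul_def, mul_comm]
        congr 1
        have : i (j θ) = (i * j) θ := rfl
        rw [this, hθ, hconj, hN]
      rw [Finset.sum_congr rfl (fun j _ => h3 j)] at h2
      simpa [Matrix.mulVec, dotProduct] using h2
    have hvec : (fun j => algebraMap k K (x.coeff j)) = 0 :=
      Matrix.eq_zero_of_mulVec_eq_zero hdetN (funext hsum)
    ext g
    have := congrFun hvec g
    simpa using (algebraMap k K).injective (by simpa using this)
  have hL_inj : Function.Injective L := by
    intro x y hxy
    have : L (x - y) = 0 := by rw [map_sub, hxy, sub_self]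
    exact sub_eq_zero.mp (hL_zero _ this)
  -- L intertwines left multiplication by group elements with the Galois action
  have hLof : ∀ (σ : K ≃ₐ[k] K) (y : MonoidAlgebra k (K ≃ₐ[k] K)),
      L (MonoidAlgebra.of k (K ≃ₐ[k] K) σ * y) = σ (L y) := by
    intro σ y
    have hmaps : L ∘ₗ LinearMap.mulLeft k (MonoidAlgebra.of k (K ≃ₐ[k] K) σ)
        = σ.toLinearMap ∘ₗ L := by
      refine MonoidAlgebra.lhom_ext' fun a => ?_
      refine LinearMap.ext fun b => ?_
      simp only [LinearMap.comp_apply, MonoidAlgebra.lsingle_apply,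
        LinearMap.mulLeft_apply, AlgEquiv.toLinearMap_apply]
      rw [show MonoidAlgebra.of k (K ≃ₐ[k] K) σ * MonoidAlgebra.single a b
          = MonoidAlgebra.single (σ * a) b by
        rw [MonoidAlgebra.of_apply, MonoidAlgebra.single_mul_single, one_mul]]
      rw [hL_single, hL_single, map_smul]
      rfl
    exact DFunLike.congr_fun hmaps y
  -- V is stable under left multiplication by the whole group algebra
  have hmul : ∀ (r x : MonoidAlgebra k (K ≃ₐ[k] K)), x ∈ V → r * x ∈ V := by
    intro r x hx
    induction r using MonoidAlgebra.induction_linear with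
    | zero => rw [zero_mul]; exact V.zero_mem
    | add p q hp hq => rw [add_mul]; exact V.add_mem hp hq
    | single a b =>
      have : MonoidAlgebra.single a b * x = b • (MonoidAlgebra.of k (K ≃ₐ[k] K) a * x) := by
        rw [MonoidAlgebra.of_apply, ← smul_mul_assoc, MonoidAlgebra.smul_single', mul_one]
      rw [this]
      exact V.smul_mem b (hstable a x hx)
  -- a k-linear projection onto V
  obtain ⟨U, hU⟩ := Submodule.exists_isCompl V
  set π : MonoidAlgebra k (K ≃ₐ[k] K) →ₗ[k] MonoidAlgebra k (K ≃ₐ[k] K) :=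
    V.subtype ∘ₗ (V.linearProjOfIsCompl U hU) with hπ
  have hπ_mem : ∀ x, π x ∈ V := fun x => (V.linearProjOfIsCompl U hU x).2
  have hπ_id : ∀ x ∈ V, π x = x := by
    intro x hx
    have : (V.linearProjOfIsCompl U hU) ↑(⟨x, hx⟩ : V) = ⟨x, hx⟩ :=
      Submodule.linearProjOfIsCompl_apply_left hU ⟨x, hx⟩
    simp only [hπ, LinearMap.comp_apply]
    rw [show (V.linearProjOfIsCompl U hU) x = (V.linearProjOfIsCompl U hU) ↑(⟨x, hx⟩ : V) from rfl,
      this]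
    rfl
  -- averaged projection, and the right identity e of the left ideal V
  have hcard0 : ((Fintype.card (K ≃ₐ[k] K) : k)) ≠ 0 :=
    Nat.cast_ne_zero.mpr Fintype.card_ne_zero
  set P : MonoidAlgebra k (K ≃ₐ[k] K) →ₗ[k] MonoidAlgebra k (K ≃ₐ[k] K) :=
    (Fintype.card (K ≃ₐ[k] K) : k)⁻¹ • ∑ g : K ≃ₐ[k] K,
      (LinearMap.mulLeft k (MonoidAlgebra.of k (K ≃ₐ[k] K) g⁻¹)) ∘ₗ π ∘ₗ
        (LinearMap.mulLeft k (MonoidAlgebra.of k (K ≃ₐ[k] K) g)) with hP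
  have hP_apply : ∀ x, P x = (Fintype.card (K ≃ₐ[k] K) : k)⁻¹ •
      ∑ g : K ≃ₐ[k] K, MonoidAlgebra.of k (K ≃ₐ[k] K) g⁻¹ *
        π (MonoidAlgebra.of k (K ≃ₐ[k] K) g * x) := by
    intro x
    simp [hP, LinearMap.sum_apply]
  have hP_mem : ∀ x, P x ∈ V := by
    intro x
    rw [hP_apply]
    exact V.smul_mem _ (Submodule.sum_mem V fun g _ => hmul _ _ (hπ_mem _))
  have hP_id : ∀ x ∈ V, P x = x := by
    intro x hx
    rw [hP_apply]
    have hterm : ∀ g : K ≃ₐ[k] K,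
        MonoidAlgebra.of k (K ≃ₐ[k] K) g⁻¹ * π (MonoidAlgebra.of k (K ≃ₐ[k] K) g * x) = x := by
      intro g
      rw [hπ_id _ (hmul _ _ hx), ← mul_assoc, ← map_mul, inv_mul_cancel, map_one, one_mul]
    rw [Finset.sum_congr rfl (fun g _ => hterm g), Finset.sum_const, Finset.card_univ,
      ← Nat.cast_smul_eq_nsmul k, smul_smul, inv_mul_cancel₀ hcard0, one_smul]
  set e : MonoidAlgebra k (K ≃ₐ[k] K) := P 1 with hePdef
  have he_mem : e ∈ V := hP_mem 1
  -- P is right multiplication by e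
  have hPr : ∀ x, P x = x * e := by
    have hmaps : P = LinearMap.mulRight k e := by
      refine MonoidAlgebra.lhom_ext' fun a => ?_
      refine LinearMap.ext fun b => ?_
      simp only [LinearMap.comp_apply, MonoidAlgebra.lsingle_apply, LinearMap.mulRight_apply]
      rw [hP_apply, hePdef, hP_apply, mul_smul_comm, Finset.mul_sum]
      congr 1
      refine Fintype.sum_bijective (· * a) (Group.mulRight_bijective a) _ _ fun g => ?_
      rw [mul_one]
      have h1 : MonoidAlgebra.of k (K ≃ₐ[k] K) g * MonoidAlgebra.single a b
          = b • MonoidAlgebra.of k (K ≃ₐ[k] K) (g * a) := by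
        rw [MonoidAlgebra.of_apply, MonoidAlgebra.of_apply, MonoidAlgebra.single_mul_single,
          one_mul, MonoidAlgebra.smul_single', mul_one]
      rw [h1, map_smul, mul_smul_comm]
      beta_reduce
      rw [← mul_assoc, mul_inv_rev]
      simp only [MonoidAlgebra.of_apply]
      rw [MonoidAlgebra.single_mul_single, mul_inv_cancel_left, mul_one]
      rw [show MonoidAlgebra.single (g⁻¹ : K ≃ₐ[k] K) b
          = b • MonoidAlgebra.single (g⁻¹ : K ≃ₐ[k] K) (1 : k) by
        rw [MonoidAlgebra.smul_single', mul_one], smul_mul_assoc]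
    intro x
    rw [hmaps]
    rfl
  have he : ∀ x ∈ V, x * e = x := by
    intro x hx
    rw [← hPr, hP_id x hx]
  -- finite dimensionality of the group algebra
  haveI hfdR : FiniteDimensional k (MonoidAlgebra k (K ≃ₐ[k] K)) :=
    inferInstance
  -- choose u ∈ V not fixed by any nontrivial element
  have havoid : ∃ u' : V, ∀ σ : {σ : K ≃ₐ[k] K // σ ≠ 1},
      u' ∉ LinearMap.ker ((LinearMap.mulLeft k (MonoidAlgebra.of k (K ≃ₐ[k] K) σ.1)
        - LinearMap.id) ∘ₗ V.subtype) := by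
    apply exists_avoid
    intro σ
    intro htop
    apply σ.2
    apply hfaith
    intro x hx
    have hmem : (⟨x, hx⟩ : V) ∈ LinearMap.ker ((LinearMap.mulLeft k
        (MonoidAlgebra.of k (K ≃ₐ[k] K) σ.1) - LinearMap.id) ∘ₗ V.subtype) := by
      rw [htop]; trivial
    rw [LinearMap.mem_ker, LinearMap.comp_apply] at hmem
    simpa [sub_eq_zero] using hmem
  obtain ⟨u', hu'⟩ := havoid
  set u : MonoidAlgebra k (K ≃ₐ[k] K) := (u' : MonoidAlgebra k (K ≃ₐ[k] K)) with hu_def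
  have hu_mem : u ∈ V := u'.2
  have hu : ∀ σ : K ≃ₐ[k] K, σ ≠ 1 → MonoidAlgebra.of k (K ≃ₐ[k] K) σ * u ≠ u := by
    intro σ hσ heq
    apply hu' ⟨σ, hσ⟩
    rw [LinearMap.mem_ker, LinearMap.comp_apply]
    simp only [LinearMap.sub_apply, LinearMap.mulLeft_apply, LinearMap.id_apply,
      Submodule.coe_subtype]
    rw [← hu_def, heq, sub_self]
  -- the two codomain-restricted multiplication maps
  set f₀ : MonoidAlgebra k (K ≃ₐ[k] K) →ₗ[k] V :=
    (LinearMap.mulRight k u).codRestrict V (fun x => hmul x u hu_mem) with hf₀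
  set g₀ : MonoidAlgebra k (K ≃ₐ[k] K) →ₗ[k] V :=
    (LinearMap.mulRight k e).codRestrict V (fun x => hmul x e he_mem) with hg₀
  have hg₀surj : Function.Surjective g₀ := by
    rintro ⟨y, hy⟩
    exact ⟨y, Subtype.ext (he y hy)⟩
  have hB1 : {t : k | ¬ Function.Surjective (f₀ + t • g₀)}.Finite :=
    pencil_finite f₀ g₀ hg₀surj
  have hB2 : (⋃ σ ∈ {σ : K ≃ₐ[k] K | σ ≠ 1},
      {t : k | MonoidAlgebra.of k (K ≃ₐ[k] K) σ * u - u
        + t • (MonoidAlgebra.of k (K ≃ₐ[k] K) σ * e - e) = 0}).Finite := by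
    refine Set.Finite.biUnion (Set.toFinite _) ?_
    intro σ hσ
    refine Set.Subsingleton.finite ?_
    intro t1 h1 t2 h2
    simp only [Set.mem_setOf_eq] at h1 h2
    by_cases hB : MonoidAlgebra.of k (K ≃ₐ[k] K) σ * e - e = 0
    · exfalso
      rw [hB, smul_zero, add_zero, sub_eq_zero] at h1
      exact hu σ hσ h1
    · have h3 : (t1 - t2) • (MonoidAlgebra.of k (K ≃ₐ[k] K) σ * e - e) = 0 := by
        rw [sub_smul]
        have := congrArg₂ (· - ·) h1 h2
        simpa using this
      rcases smul_eq_zero.mp h3 with h4 | h4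
      · exact sub_eq_zero.mp h4
      · exact absurd h4 hB
  obtain ⟨t, ht⟩ := (hB1.union hB2).infinite_compl.nonempty
  rw [Set.mem_compl_iff, Set.mem_union] at ht
  push_neg at ht
  obtain ⟨ht1, ht2⟩ := ht
  rw [Set.mem_setOf_eq, not_not] at ht1
  -- the generator v = u + t • e
  set v : MonoidAlgebra k (K ≃ₐ[k] K) := u + t • e with hv_def
  have hv_mem : v ∈ V := V.add_mem hu_mem (V.smul_mem t he_mem)
  have hstabv : ∀ σ : K ≃ₐ[k] K, σ ≠ 1 → MonoidAlgebra.of k (K ≃ₐ[k] K) σ * v ≠ v := by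
    intro σ hσ heq
    apply ht2
    refine Set.mem_biUnion (show σ ∈ {σ : K ≃ₐ[k] K | σ ≠ 1} from hσ) ?_
    rw [Set.mem_setOf_eq]
    have hexp : MonoidAlgebra.of k (K ≃ₐ[k] K) σ * u - u
        + t • (MonoidAlgebra.of k (K ≃ₐ[k] K) σ * e - e)
        = MonoidAlgebra.of k (K ≃ₐ[k] K) σ * v - v := by
      rw [hv_def, mul_add, mul_smul_comm, smul_sub]
      abel
    rw [hexp, heq, sub_self]
  have hgen : ∀ y ∈ V, ∃ x : MonoidAlgebra k (K ≃ₐ[k] K), x * v = y := by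
    intro y hy
    obtain ⟨x, hx⟩ := ht1 ⟨y, hy⟩
    refine ⟨x, ?_⟩
    have hx' := congrArg (Subtype.val) hx
    simp only [LinearMap.add_apply, LinearMap.smul_apply, Submodule.coe_add,
      SetLike.val_smul, hf₀, hg₀, LinearMap.codRestrict_apply,
      LinearMap.mulRight_apply] at hx'
    rw [hv_def, mul_add, mul_smul_comm]
    exact hx'
  -- the element α
  set α : K := L v with hα
  have hσα : ∀ σ : K ≃ₐ[k] K, σ α = L (MonoidAlgebra.of k (K ≃ₐ[k] K) σ * v) :=
    fun σ => (hLof σ v).symm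
  have hinj_orbit : Function.Injective (fun σ : K ≃ₐ[k] K => σ α) := by
    intro σ τ heq
    simp only at heq
    by_contra hne
    have h1 : τ⁻¹ * σ ≠ 1 := fun habs => hne (by
      have := congrArg (τ * ·) habs
      simpa [← mul_assoc] using this)
    apply hstabv (τ⁻¹ * σ) h1
    apply hL_inj
    have e1 : L (MonoidAlgebra.of k (K ≃ₐ[k] K) (τ⁻¹ * σ) * v) = τ⁻¹ (σ (L v)) := by
      rw [show MonoidAlgebra.of k (K ≃ₐ[k] K) (τ⁻¹ * σ)
          = MonoidAlgebra.of k (K ≃ₐ[k] K) τ⁻¹ * MonoidAlgebra.of k (K ≃ₐ[k] K) σ from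
        map_mul (MonoidAlgebra.of k (K ≃ₐ[k] K)) τ⁻¹ σ, mul_assoc, hLof, hLof]
    rw [e1, ← hα, heq]
    show τ⁻¹ (τ α) = L v
    rw [← AlgEquiv.mul_apply, inv_mul_cancel, AlgEquiv.one_apply, hα]
  set O : Set K := Set.range (fun σ : K ≃ₐ[k] K => σ α) with hO
  have hroot : O ⊆ (minpoly k α).rootSet K := by
    rintro _ ⟨σ, rfl⟩
    rw [Polynomial.mem_rootSet]
    refine ⟨minpoly.ne_zero (Algebra.IsIntegral.isIntegral α), ?_⟩
    have := Polynomial.aeval_algHom_apply σ.toAlgHom α (minpoly k α)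
    rw [minpoly.aeval, map_zero] at this
    exact this
  have hrootfin : ((minpoly k α).rootSet K).Finite := (minpoly k α).rootSet_finite K
  have hO1 : O.ncard = Fintype.card (K ≃ₐ[k] K) := by
    rw [hO, ← Nat.card_coe_set_eq, Nat.card_range_of_injective hinj_orbit,
      Nat.card_eq_fintype_card]
  have hO2 : ((minpoly k α).rootSet K).ncard ≤ (minpoly k α).natDegree := by
    rw [Polynomial.rootSet_def, Set.ncard_coe_finset]
    refine (Multiset.toFinset_card_le _).trans ?_
    refine (Polynomial.card_roots' _).trans ?_
    rw [Polynomial.natDegree_map]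
  have hO3 : (minpoly k α).natDegree ≤ Module.finrank k K := minpoly.natDegree_le α
  have hle : Fintype.card (K ≃ₐ[k] K) ≤ ((minpoly k α).rootSet K).ncard := by
    rw [← hO1]
    exact Set.ncard_le_ncard hroot hrootfin
  have hdeg : (minpoly k α).natDegree = Module.finrank k K := by
    have := (hle.trans hO2).trans hO3
    omega
  have hOroot : O = (minpoly k α).rootSet K := by
    refine Set.eq_of_subset_of_ncard_le hroot ?_ hrootfin
    rw [hO1]
    calc ((minpoly k α).rootSet K).ncard ≤ (minpoly k α).natDegree := hO2
      _ ≤ Module.finrank k K := hO3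
      _ = Fintype.card (K ≃ₐ[k] K) := hcard.symm
  -- the span of the conjugates is the image of V under L
  have hspan : Submodule.span k ((minpoly k α).rootSet K) = Submodule.map L V := by
    rw [← hOroot]
    apply le_antisymm
    · rw [Submodule.span_le]
      rintro _ ⟨σ, rfl⟩
      exact ⟨MonoidAlgebra.of k (K ≃ₐ[k] K) σ * v, hmul _ _ hv_mem, (hσα σ).symm⟩
    · rintro _ ⟨w, hw, rfl⟩
      obtain ⟨x, hx⟩ := hgen w hw
      rw [← hx]
      clear hx
      induction x using MonoidAlgebra.induction_linear with
      | zero => rw [zero_mul, map_zero]; exact Submodule.zero_mem _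
      | add p q hp hq => rw [add_mul, map_add]; exact Submodule.add_mem _ hp hq
      | single a b =>
        have h1 : MonoidAlgebra.single a b * v
            = b • (MonoidAlgebra.of k (K ≃ₐ[k] K) a * v) := by
          rw [MonoidAlgebra.of_apply, ← smul_mul_assoc, MonoidAlgebra.smul_single', mul_one]
        rw [h1, map_smul]
        refine Submodule.smul_mem _ b (Submodule.subset_span ?_)
        rw [hLof, ← hα]
        exact ⟨a, rfl⟩
  have hfr : Module.finrank k (Submodule.map L V) = n := by
    rw [← hdim]
    exact (LinearEquiv.finrank_eq (Submodule.equivMapOfInjective L hL_inj V)).symm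
  refine ⟨α, ?_, hdeg, ?_⟩
  · rw [hspan]
    exact hfr
  · rw [← hcard, Nat.card_eq_fintype_card]
end

section
/- The invariant field Q(x₁,…,x₆)^G for G = ⟨W(E₆), −I⟩ ≤ GL₆(Q) is purely transcendental over Q: if Q(x₁,…,x₆)^{W(E₆)} = Q(I₂,I₅,I₆,I₈,I₉,I₁₂) with I_j homogeneous of degree j, then Q(x₁,…,x₆)^G = Q(I₂,I₆,I₈,I₁₂,I₅², I₅I₉). -/
open MvPolynomial

set_option maxRecDepth 10000
set_option maxHeartbeats 1000000
open MvPolynomial IntermediateField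

theorem aeval_neg_homog {σ : Type*} {S : Type*} [CommRing S] [Algebra ℚ S]
    {p : MvPolynomial σ ℚ} {n : ℕ} (hp : p.IsHomogeneous n) (f : σ → S) :
    aeval (fun i => -(f i)) p = (-1 : S) ^ n * aeval f p := by
  rw [aeval_def, aeval_def, eval₂_eq, eval₂_eq, Finset.mul_sum]
  refine Finset.sum_congr rfl fun d hd => ?_
  rw [mem_support_iff] at hd
  have hsum : ∑ i ∈ d.support, d i = n := by
    simpa [Finsupp.weight_apply, Finsupp.sum, mul_one] using hp hd
  have : ∏ i ∈ d.support, (-(f i)) ^ d i = (-1 : S) ^ n * ∏ i ∈ d.support, f i ^ d i := by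
    rw [← hsum, ← Finset.prod_pow_eq_pow_sum, ← Finset.prod_mul_distrib]
    exact Finset.prod_congr rfl fun i _ => neg_pow (f i) (d i)
  rw [this]; ring

/-- Pure transcendence of the invariant field of `G = ⟨W(E₆), −I⟩` ≤ GL₆(ℚ):
let `L = ℚ(x₁,…,x₆)`, `ν` the automorphism with `ν(xᵢ) = −xᵢ` (induced by
`−I`), and `W` a subgroup of `Aut(L/ℚ)` (the Weyl group `W(E₆)`) whose fixed
field is `ℚ(I₂,I₅,I₆,I₈,I₉,I₁₂)` where `I : Fin 6 → ℚ[x₁,…,x₆]` are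
algebraically independent homogeneous invariants of degrees `2,5,6,8,9,12`
(Chevalley).  Then the fixed field of `G = ⟨W, ν⟩` equals
`ℚ(I₂,I₆,I₈,I₁₂,I₅², I₅·I₉)`, so it is purely transcendental over `ℚ`. -/
theorem stmt_5
    (ν : FractionRing (MvPolynomial (Fin 6) ℚ) ≃ₐ[ℚ] FractionRing (MvPolynomial (Fin 6) ℚ))
    (hν : ∀ i : Fin 6,
      ν (algebraMap (MvPolynomial (Fin 6) ℚ) (FractionRing (MvPolynomial (Fin 6) ℚ)) (X i)) =
        - algebraMap (MvPolynomial (Fin 6) ℚ) (FractionRing (MvPolynomial (Fin 6) ℚ)) (X i))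
    (W : Subgroup (FractionRing (MvPolynomial (Fin 6) ℚ) ≃ₐ[ℚ]
      FractionRing (MvPolynomial (Fin 6) ℚ)))
    (I : Fin 6 → MvPolynomial (Fin 6) ℚ)
    (hdeg : ∀ j : Fin 6, (I j).IsHomogeneous (![2, 5, 6, 8, 9, 12] j))
    (hind : AlgebraicIndependent ℚ fun j : Fin 6 =>
      algebraMap (MvPolynomial (Fin 6) ℚ) (FractionRing (MvPolynomial (Fin 6) ℚ)) (I j))
    (hfix : IntermediateField.fixedField W =
      IntermediateField.adjoin ℚ (Set.range fun j : Fin 6 =>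
        algebraMap (MvPolynomial (Fin 6) ℚ) (FractionRing (MvPolynomial (Fin 6) ℚ)) (I j))) :
    IntermediateField.fixedField (W ⊔ Subgroup.closure {ν}) =
      IntermediateField.adjoin ℚ
        (((fun p : MvPolynomial (Fin 6) ℚ =>
            algebraMap (MvPolynomial (Fin 6) ℚ) (FractionRing (MvPolynomial (Fin 6) ℚ)) p) ''
          {I 0, I 2, I 3, I 5, I 1 ^ 2, I 1 * I 4}) :
          Set (FractionRing (MvPolynomial (Fin 6) ℚ))) := by
  set φ := algebraMap (MvPolynomial (Fin 6) ℚ) (FractionRing (MvPolynomial (Fin 6) ℚ)) with hφ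
  set u : Fin 6 → FractionRing (MvPolynomial (Fin 6) ℚ) := fun j => φ (I j) with hu
  -- ν on the image of a homogeneous polynomial
  have hcomp : ∀ p : MvPolynomial (Fin 6) ℚ, ν (φ p) = aeval (fun i => -(φ (X i))) p := by
    have : (ν.toAlgHom.comp (IsScalarTower.toAlgHom ℚ (MvPolynomial (Fin 6) ℚ) (FractionRing (MvPolynomial (Fin 6) ℚ))))
        = aeval (fun i => -(φ (X i))) := by
      apply MvPolynomial.algHom_ext
      intro i
      simpa using hν i
    intro p
    have := DFunLike.congr_fun this p
    simpa using this
  have hsign : ∀ (p : MvPolynomial (Fin 6) ℚ) (n : ℕ), p.IsHomogeneous n → ν (φ p) = (-1 : FractionRing (MvPolynomial (Fin 6) ℚ)) ^ n * φ p := by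
    intro p n hp
    rw [hcomp p, aeval_neg_homog hp]
    congr 1
    have : (aeval (fun i => φ (X i)) : MvPolynomial (Fin 6) ℚ →ₐ[ℚ] FractionRing (MvPolynomial (Fin 6) ℚ)) = (IsScalarTower.toAlgHom ℚ (MvPolynomial (Fin 6) ℚ) (FractionRing (MvPolynomial (Fin 6) ℚ))) := by
      apply MvPolynomial.algHom_ext; intro i; simp; rfl
    exact DFunLike.congr_fun this p
  -- signs on the generators
  have hseven : ∀ j : Fin 6, Even (![2,5,6,8,9,12] j) → ν (u j) = u j := by
    intro j hj
    rw [hu, hsign (I j) _ (hdeg j), (hj.neg_one_pow), one_mul]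
  have hν0 : ν (u 0) = u 0 := hseven 0 (by decide)
  have hν2 : ν (u 2) = u 2 := hseven 2 (by decide)
  have hν3 : ν (u 3) = u 3 := hseven 3 (by decide)
  have hν5 : ν (u 5) = u 5 := hseven 5 (by decide)
  have hν1 : ν (u 1) = -u 1 := by
    rw [hu, hsign (I 1) _ (hdeg 1)]
    norm_num
  have hν4 : ν (u 4) = -u 4 := by
    rw [hu, hsign (I 4) _ (hdeg 4)]
    rw [show (![2, 5, 6, 8, 9, 12] : Fin 6 → ℕ) 4 = 9 from rfl]
    norm_num
  -- membership in fixed fields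
  have hmem : ∀ (H : Subgroup (FractionRing (MvPolynomial (Fin 6) ℚ) ≃ₐ[ℚ] FractionRing (MvPolynomial (Fin 6) ℚ))) (x : FractionRing (MvPolynomial (Fin 6) ℚ)),
      x ∈ IntermediateField.fixedField H ↔ H ≤ MulAction.stabilizer (FractionRing (MvPolynomial (Fin 6) ℚ) ≃ₐ[ℚ] FractionRing (MvPolynomial (Fin 6) ℚ)) x := by
    intro H x
    constructor
    · intro h g hg
      exact h ⟨g, hg⟩
    · intro h g
      exact h g.2
  have hmemsup : ∀ x : FractionRing (MvPolynomial (Fin 6) ℚ), x ∈ IntermediateField.fixedField (W ⊔ Subgroup.closure {ν}) ↔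
      (x ∈ IntermediateField.fixedField W ∧ ν x = x) := by
    intro x
    rw [hmem, hmem, sup_le_iff, Subgroup.closure_le, Set.singleton_subset_iff]
    rfl
  have hmemν : ∀ x : FractionRing (MvPolynomial (Fin 6) ℚ), x ∈ IntermediateField.fixedField (Subgroup.closure {ν}) ↔ ν x = x := by
    intro x
    rw [hmem, Subgroup.closure_le, Set.singleton_subset_iff]
    rfl
  set F : IntermediateField ℚ (FractionRing (MvPolynomial (Fin 6) ℚ)) := IntermediateField.adjoin ℚ
      ((fun p : MvPolynomial (Fin 6) ℚ => φ p) '' {I 0, I 2, I 3, I 5, I 1 ^ 2, I 1 * I 4}) with hF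
  set K : IntermediateField ℚ (FractionRing (MvPolynomial (Fin 6) ℚ)) := IntermediateField.adjoin ℚ (Set.range u) with hK
  -- generators of F
  have hg0 : u 0 ∈ F := IntermediateField.subset_adjoin _ _ ⟨I 0, by simp, rfl⟩
  have hg2 : u 2 ∈ F := IntermediateField.subset_adjoin _ _ ⟨I 2, by simp, rfl⟩
  have hg3 : u 3 ∈ F := IntermediateField.subset_adjoin _ _ ⟨I 3, by simp, rfl⟩
  have hg5 : u 5 ∈ F := IntermediateField.subset_adjoin _ _ ⟨I 5, by simp, rfl⟩
  have hg1 : u 1 ^ 2 ∈ F := by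
    have : φ (I 1 ^ 2) ∈ F := IntermediateField.subset_adjoin _ _ ⟨I 1 ^ 2, by simp, rfl⟩
    rwa [map_pow] at this
  have hg14 : u 1 * u 4 ∈ F := by
    have : φ (I 1 * I 4) ∈ F := IntermediateField.subset_adjoin _ _ ⟨I 1 * I 4, by simp, rfl⟩
    rwa [map_mul] at this
  -- F is fixed by ν
  have hFν : ∀ y ∈ F, ν y = y := by
    have hle : F ≤ IntermediateField.fixedField (Subgroup.closure {ν}) := by
      rw [hF, IntermediateField.adjoin_le_iff]
      rintro y ⟨p, hp, rfl⟩
      simp only [Set.mem_insert_iff, Set.mem_singleton_iff] at hp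
      rcases hp with rfl|rfl|rfl|rfl|rfl|rfl
      · exact (hmemν _).mpr hν0
      · exact (hmemν _).mpr hν2
      · exact (hmemν _).mpr hν3
      · exact (hmemν _).mpr hν5
      · refine (hmemν _).mpr ?_
        show ν (φ (I 1 ^ 2)) = φ (I 1 ^ 2)
        rw [map_pow, map_pow, hν1]; ring
      · refine (hmemν _).mpr ?_
        show ν (φ (I 1 * I 4)) = φ (I 1 * I 4)
        rw [map_mul, map_mul, hν1, hν4]; ring
    intro y hy
    exact (hmemν y).mp (hle hy)
  -- F is fixed by W
  have hFW : F ≤ IntermediateField.fixedField W := by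
    rw [hfix]
    rw [hF, IntermediateField.adjoin_le_iff]
    rintro y ⟨p, hp, rfl⟩
    simp only [Set.mem_insert_iff, Set.mem_singleton_iff] at hp
    have hrange : ∀ j : Fin 6, φ (I j) ∈ IntermediateField.adjoin ℚ (Set.range fun j : Fin 6 => φ (I j)) :=
      fun j => IntermediateField.subset_adjoin _ _ ⟨j, rfl⟩
    rcases hp with rfl|rfl|rfl|rfl|rfl|rfl
    · exact hrange 0
    · exact hrange 2
    · exact hrange 3
    · exact hrange 5
    · show φ (I 1 ^ 2) ∈ _
      rw [map_pow]; exact pow_mem (hrange 1) 2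
    · show φ (I 1 * I 4) ∈ _
      rw [map_mul]; exact mul_mem (hrange 1) (hrange 4)
  have hu1ne : u 1 ≠ 0 := hind.ne_zero 1
  apply le_antisymm
  · -- hard direction
    intro x hx
    obtain ⟨hxW, hxν⟩ := (hmemsup x).mp hx
    rw [hfix] at hxW
    -- x ∈ K, show x ∈ F
    -- u 1 is integral over F
    have hint : IsIntegral F (u 1) := by
      refine ⟨Polynomial.X ^ 2 - Polynomial.C ⟨u 1 ^ 2, hg1⟩, ?_, ?_⟩
      · apply Polynomial.monic_X_pow_sub_C _ (by norm_num)
      · simp [Polynomial.aeval_def]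
    have hadj : ∀ y : FractionRing (MvPolynomial (Fin 6) ℚ), y ∈ F⟮u 1⟯ → y ∈ Algebra.adjoin F {u 1} := by
      intro y hy
      rw [← IntermediateField.mem_toSubalgebra,
        IntermediateField.adjoin_simple_toSubalgebra_of_isAlgebraic hint.isAlgebraic] at hy
      exact hy
    -- K ≤ F⟮u 1⟯
    have hKle : ∀ y : FractionRing (MvPolynomial (Fin 6) ℚ), y ∈ IntermediateField.adjoin ℚ (Set.range fun j : Fin 6 => φ (I j)) →
        y ∈ F⟮u 1⟯ := by
      intro y hy
      have : IntermediateField.adjoin ℚ (Set.range fun j : Fin 6 => φ (I j)) ≤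
          (F⟮u 1⟯).restrictScalars ℚ := by
        rw [IntermediateField.adjoin_le_iff]
        rintro z ⟨j, rfl⟩
        have hFsub : ∀ w : FractionRing (MvPolynomial (Fin 6) ℚ), w ∈ F → w ∈ F⟮u 1⟯ := by
          intro w hw
          exact IntermediateField.algebraMap_mem (F⟮u 1⟯) ⟨w, hw⟩
        have hu1m : u 1 ∈ F⟮u 1⟯ := IntermediateField.mem_adjoin_simple_self F (u 1)
        fin_cases j
        · exact hFsub _ hg0
        · exact hu1m
        · exact hFsub _ hg2
        · exact hFsub _ hg3
        · show u 4 ∈ F⟮u 1⟯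
          have h4 : u 4 = (u 1 * u 4) / u 1 := by field_simp
          rw [h4]
          exact div_mem (hFsub _ hg14) hu1m
        · exact hFsub _ hg5
      exact this hy
    have hx1 : x ∈ Algebra.adjoin F {u 1} := hadj x (hKle x hxW)
    -- decomposition
    have hdecomp : ∀ y ∈ Algebra.adjoin F {u 1},
        ∃ a b : FractionRing (MvPolynomial (Fin 6) ℚ), a ∈ F ∧ b ∈ F ∧ y = a + b * u 1 := by
      intro y hy
      induction hy using Algebra.adjoin_induction with
      | mem z hz =>
        rw [Set.mem_singleton_iff] at hz
        exact ⟨0, 1, zero_mem F, one_mem F, by rw [hz]; ring⟩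
      | algebraMap c => exact ⟨c, 0, c.2, zero_mem F, by rw [IntermediateField.algebraMap_apply]; ring⟩
      | add z w _ _ hz hw =>
        obtain ⟨a, b, ha, hb, rfl⟩ := hz
        obtain ⟨a', b', ha', hb', rfl⟩ := hw
        exact ⟨a + a', b + b', add_mem ha ha', add_mem hb hb', by ring⟩
      | mul z w _ _ hz hw =>
        obtain ⟨a, b, ha, hb, rfl⟩ := hz
        obtain ⟨a', b', ha', hb', rfl⟩ := hw
        refine ⟨a * a' + b * b' * (u 1 ^ 2), a * b' + a' * b,
          add_mem (mul_mem ha ha') (mul_mem (mul_mem hb hb') hg1),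
          add_mem (mul_mem ha hb') (mul_mem ha' hb), by ring⟩
    obtain ⟨a, b, ha, hb, hxab⟩ := hdecomp x hx1
    have hνx : ν x = a - b * u 1 := by
      rw [hxab, map_add, map_mul, hFν a ha, hFν b hb, hν1]; ring
    have h2 : (2 : FractionRing (MvPolynomial (Fin 6) ℚ)) * (b * u 1) = 0 := by
      have := hxν
      rw [hνx, hxab] at this
      linear_combination -this
    haveI : CharZero (FractionRing (MvPolynomial (Fin 6) ℚ)) := charZero_of_injective_algebraMap (algebraMap ℚ (FractionRing (MvPolynomial (Fin 6) ℚ))).injective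
    have hbu : b * u 1 = 0 := by
      rcases mul_eq_zero.mp h2 with h | h
      · exact absurd h two_ne_zero
      · exact h
    have hb0 : b = 0 := by
      rcases mul_eq_zero.mp hbu with h | h
      · exact h
      · exact absurd h hu1ne
    rw [hxab, hb0, zero_mul, add_zero]
    exact ha
  · -- easy direction
    rw [IntermediateField.adjoin_le_iff]
    intro y hy
    refine (hmemsup y).mpr ⟨hFW (IntermediateField.subset_adjoin _ _ hy), ?_⟩
    exact hFν y (IntermediateField.subset_adjoin _ _ hy)
end

section
/- Let k ⊆ R and f(x) = x^n − a₁x^{n−1} + ⋯ + (−1)^n a_n ∈ k[x] of degree n ≥ 2 with Galois group S_n, whose roots r₁,…,r_n are real and satisfy r₁ < 0 < r₂ < ⋯ < r_n. Then K = k(√r₁,…,√r_n) satisfies [K:k] = 2^n·n!. -/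
open Polynomial

section Helpers

variable {E : Type*} [Field E]

lemma quad_decomp (F : Subfield E) (v : E) (hv : v^2 ∈ F) {u : E}
    (hu : u ∈ Subfield.closure (↑F ∪ {v})) :
    ∃ a ∈ F, ∃ b ∈ F, u = a + b * v := by
  let Sf : Subfield E :=
  { carrier := {x | ∃ a ∈ F, ∃ b ∈ F, x = a + b * v}
    zero_mem' := ⟨0, F.zero_mem, 0, F.zero_mem, by ring⟩
    one_mem' := ⟨1, F.one_mem, 0, F.zero_mem, by ring⟩
    add_mem' := by
      rintro x y ⟨a, ha, b, hb, rfl⟩ ⟨c, hc, d, hd, rfl⟩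
      exact ⟨a + c, F.add_mem ha hc, b + d, F.add_mem hb hd, by ring⟩
    neg_mem' := by
      rintro x ⟨a, ha, b, hb, rfl⟩
      exact ⟨-a, F.neg_mem ha, -b, F.neg_mem hb, by ring⟩
    mul_mem' := by
      rintro x y ⟨a, ha, b, hb, rfl⟩ ⟨c, hc, d, hd, rfl⟩
      refine ⟨a * c + b * d * v ^ 2, F.add_mem (F.mul_mem ha hc) (F.mul_mem (F.mul_mem hb hd) hv),
        a * d + b * c, F.add_mem (F.mul_mem ha hd) (F.mul_mem hb hc), by ring⟩
    inv_mem' := by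
      rintro x ⟨a, ha, b, hb, rfl⟩
      rcases eq_or_ne (a + b * v) 0 with h0 | h0
      · exact ⟨0, F.zero_mem, 0, F.zero_mem, by rw [h0]; simp⟩
      rcases eq_or_ne (a^2 - b^2 * v^2) 0 with hN | hN
      · -- then a - b*v = 0, so x = 2*a ∈ F
        have h2 : (a + b * v) * (a - b * v) = 0 := by rw [← hN]; ring
        have h3 : a - b * v = 0 := by
          rcases mul_eq_zero.mp h2 with h | h
          · exact absurd h h0
          · exact h
        have hx : a + b * v = 2 * a := by
          have : b * v = a := by linear_combination -h3
          rw [this]; ring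
        rw [hx]
        refine ⟨(2 * a)⁻¹, F.inv_mem (F.mul_mem (by rw [show (2:E)=1+1 by norm_num]; exact F.add_mem F.one_mem F.one_mem : (2:E) ∈ F) ha), 0, F.zero_mem, by ring⟩
      · refine ⟨a / (a^2 - b^2 * v^2), F.div_mem ha (F.sub_mem (by exact pow_mem ha 2)
          (F.mul_mem (pow_mem hb 2) hv)), -b / (a^2 - b^2 * v^2), F.div_mem (F.neg_mem hb)
          (F.sub_mem (pow_mem ha 2) (F.mul_mem (pow_mem hb 2) hv)), ?_⟩
        field_simp
        ring }
  have : Subfield.closure (↑F ∪ {v}) ≤ Sf := by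
    rw [Subfield.closure_le]
    rintro x (hx | rfl)
    · exact ⟨x, hx, 0, F.zero_mem, by ring⟩
    · exact ⟨0, F.zero_mem, 1, F.one_mem, by ring⟩
  exact this hu

lemma quad_step (F : Subfield E) (h2 : (2:E) ≠ 0) {u v : E} (hv : v^2 ∈ F) (hu : u^2 ∈ F)
    (h : u ∈ Subfield.closure (↑F ∪ {v})) : u ∈ F ∨ u * v ∈ F := by
  obtain ⟨a, ha, b, hb, rfl⟩ := quad_decomp F v hv h
  by_cases hvF : v ∈ F
  · exact Or.inl (F.add_mem ha (F.mul_mem hb hvF))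
  have key : (2 * a * b) * v ∈ F := by
    have : (2 * a * b) * v = (a + b*v)^2 - a^2 - b^2 * v^2 := by ring
    rw [this]
    exact F.sub_mem (F.sub_mem hu (pow_mem ha 2)) (F.mul_mem (pow_mem hb 2) hv)
  by_cases hab : 2 * a * b = 0
  · rcases mul_eq_zero.mp hab with h' | hb0
    · rcases mul_eq_zero.mp h' with h'' | ha0
      · exact absurd h'' h2
      · subst ha0
        right
        have : (0 + b * v) * v = b * v^2 := by ring
        rw [this]
        exact F.mul_mem hb hv
    · subst hb0
      left
      simpa using ha
  · exfalso
    apply hvF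
    have : v = ((2*a*b) * v) / (2*a*b) := by rw [mul_div_cancel_left₀ v hab]
    rw [this]
    exact F.div_mem key (F.mul_mem (F.mul_mem (by rw [show (2:E)=1+1 by norm_num]; exact F.add_mem F.one_mem F.one_mem) ha) hb)

lemma kummer_lemma {ι : Type*} [DecidableEq ι] (F : Subfield E) (h2 : (2:E) ≠ 0) (v : ι → E)
    (t : Finset ι) (hv : ∀ i ∈ t, (v i)^2 ∈ F) :
    ∀ u : E, u^2 ∈ F → u ∈ Subfield.closure (↑F ∪ v '' ↑t) →
    ∃ S ⊆ t, u * ∏ i ∈ S, v i ∈ F := by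
  induction t using Finset.induction_on with
  | empty =>
    intro u hu h
    refine ⟨∅, Finset.Subset.refl _, ?_⟩
    simp only [Finset.prod_empty, mul_one]
    simpa [Subfield.closure_eq] using h
  | @insert a t ha IH =>
    intro u hu h
    set F' := Subfield.closure (↑F ∪ v '' ↑t) with hF'
    have hFF' : F ≤ F' := fun x hx => Subfield.subset_closure (Or.inl hx)
    have hset : (↑F ∪ v '' ↑(insert a t) : Set E) = (↑F ∪ v '' ↑t) ∪ {v a} := by
      rw [Finset.coe_insert, Set.image_insert_eq]
      ext x; simp only [Set.mem_union, Set.mem_insert_iff, Set.mem_singleton_iff]; tauto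
    have hclos : Subfield.closure (↑F ∪ v '' ↑(insert a t)) =
        Subfield.closure (↑F' ∪ {v a}) := by
      rw [hset, Subfield.closure_union (↑F ∪ v '' ↑t) {v a}, Subfield.closure_union (↑F' : Set E) {v a}, Subfield.closure_eq]
    rw [hclos] at h
    have hva : (v a)^2 ∈ F' := hFF' (hv a (Finset.mem_insert_self a t))
    have hvt : ∀ i ∈ t, (v i)^2 ∈ F := fun i hi => hv i (Finset.mem_insert_of_mem hi)
    rcases quad_step F' h2 hva (hFF' hu) h with h' | h'
    · obtain ⟨S, hSt, hmem⟩ := IH hvt u hu h'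
      exact ⟨S, hSt.trans (Finset.subset_insert a t), hmem⟩
    · have hu' : (u * v a)^2 ∈ F := by
        rw [mul_pow]
        exact F.mul_mem hu (hv a (Finset.mem_insert_self a t))
      obtain ⟨S, hSt, hmem⟩ := IH hvt (u * v a) hu' h'
      refine ⟨insert a S, Finset.insert_subset_insert a hSt, ?_⟩
      rw [Finset.prod_insert (fun hc => ha (hSt hc))]
      have heq : u * (v a * ∏ i ∈ S, v i) = u * v a * ∏ i ∈ S, v i := by ring
      rw [heq]; exact hmem



end Helpers

set_option maxHeartbeats 2000000 in
set_option synthInstance.maxHeartbeats 400000 in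
/-- Totally real variant: if `k ⊆ ℝ`, `f ∈ k[x]` is monic of degree `n ≥ 2`
with Galois group `S_n` (splitting field of degree `n!`), and its roots
`r₁,…,r_n` are real with `r₁ < 0 < r₂ < ⋯ < r_n`, then for chosen square roots
`√r_i ∈ ℂ` the field `K = k(√r₁,…,√r_n)` has degree `2^n·n!` over `k`. -/
theorem stmt_7 {k : Type*} [Field k] [Algebra k ℝ] [Algebra k ℂ] [IsScalarTower k ℝ ℂ]
    {n : ℕ} (hn : 2 ≤ n)
    (f : k[X]) (hmonic : f.Monic) (hdeg : f.natDegree = n)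
    (r : Fin n → ℝ)
    (hr : f.map (algebraMap k ℝ) = ∏ i : Fin n, (X - C (r i)))
    (hmono : StrictMono r)
    (hneg : r ⟨0, by omega⟩ < 0) (hpos : 0 < r ⟨1, by omega⟩)
    -- Galois group `S_n`: the splitting field inside `ℂ` has degree `n!` over `k`
    (hgal : Module.finrank k
      (IntermediateField.adjoin k (Set.range fun i => ((r i : ℂ))) : IntermediateField k ℂ) =
        n.factorial)
    (s : Fin n → ℂ) (hs : ∀ i, s i ^ 2 = (r i : ℂ)) :
    Module.finrank k
      (IntermediateField.adjoin k (Set.range s) : IntermediateField k ℂ) =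
      2 ^ n * n.factorial := by
  classical
  have hn0 : 0 < n := by omega
  set i0 : Fin n := ⟨0, by omega⟩ with hi0def
  set rc : Fin n → ℂ := fun i => ((r i : ℂ)) with hrcdef
  set L : IntermediateField k ℂ := IntermediateField.adjoin k (Set.range rc) with hLdef
  -- basic positivity facts
  have hrpos : ∀ i : Fin n, i ≠ i0 → 0 < r i := by
    intro i hi
    have h1 : (1 : ℕ) ≤ (i : ℕ) := by
      rcases Nat.eq_zero_or_pos (i : ℕ) with h | h
      · exact absurd (Fin.ext h) hi
      · omega
    calc (0:ℝ) < r ⟨1, by omega⟩ := hpos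
    _ ≤ r i := hmono.monotone (by exact h1)
  have hrne : ∀ i : Fin n, r i ≠ 0 := by
    intro i
    by_cases hi : i = i0
    · subst hi; exact ne_of_lt hneg
    · exact ne_of_gt (hrpos i hi)
  have hrcne : ∀ i : Fin n, rc i ≠ 0 := by
    intro i h
    simp only [hrcdef, Complex.ofReal_eq_zero] at h
    exact hrne i h
  have hrcinj : Function.Injective rc := by
    intro i j h
    simp only [hrcdef, Complex.ofReal_inj] at h
    exact hmono.injective h
  -- membership of roots in L
  have hmemL : ∀ i : Fin n, rc i ∈ L := fun i =>
    IntermediateField.subset_adjoin k _ ⟨i, rfl⟩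
  set ρ : Fin n → L := fun i => ⟨rc i, hmemL i⟩ with hρdef
  have hρinj : Function.Injective ρ := fun i j h => hrcinj (congrArg Subtype.val h)
  -- L is real
  have hreal : ∀ x ∈ L, ∃ y : ℝ, (y : ℂ) = x := by
    intro x hx
    have hsub : L ≤ Subfield.toIntermediateField Complex.ofRealHom.fieldRange
        (fun z => by
          rw [IsScalarTower.algebraMap_apply k ℝ ℂ]
          exact ⟨algebraMap k ℝ z, rfl⟩) := by
      rw [hLdef]
      apply IntermediateField.adjoin_le_iff.mpr
      rintro _ ⟨i, rfl⟩
      exact ⟨r i, rfl⟩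
    exact hsub hx
  -- f maps to ℂ as product of linear factors
  have hrC : f.map (algebraMap k ℂ) = ∏ i : Fin n, (X - C (rc i)) := by
    have : algebraMap k ℂ = (algebraMap ℝ ℂ).comp (algebraMap k ℝ) :=
      (IsScalarTower.algebraMap_eq k ℝ ℂ)
    rw [this, ← Polynomial.map_map, hr, Polynomial.map_prod]
    simp [hrcdef]
  have hfne : f ≠ 0 := hmonic.ne_zero
  have hsplits : (f.map (algebraMap k ℂ)).Splits := by
    rw [hrC]
    exact Polynomial.Splits.prod (fun i _ => Polynomial.Splits.X_sub_C _)
  have hrootSet : f.rootSet ℂ = Set.range rc := by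
    ext z
    rw [Polynomial.mem_rootSet]
    constructor
    · rintro ⟨-, hz⟩
      rw [Polynomial.aeval_def, ← Polynomial.eval_map, hrC, Polynomial.eval_prod] at hz
      obtain ⟨i, -, hi⟩ := Finset.prod_eq_zero_iff.mp hz
      simp only [Polynomial.eval_sub, Polynomial.eval_X, Polynomial.eval_C, sub_eq_zero] at hi
      exact ⟨i, hi.symm⟩
    · rintro ⟨i, rfl⟩
      refine ⟨hfne, ?_⟩
      rw [Polynomial.aeval_def, ← Polynomial.eval_map, hrC, Polynomial.eval_prod]
      apply Finset.prod_eq_zero (Finset.mem_univ i)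
      simp
  have hLroot : L = IntermediateField.adjoin k (f.rootSet ℂ) := by rw [hrootSet]
  have hsep : f.Separable := by
    rw [← Polynomial.separable_map (algebraMap k ℝ), hr]
    exact Polynomial.separable_prod_X_sub_C_iff.mpr hmono.injective
  have hSF : f.IsSplittingField k L := by
    rw [hLroot]
    exact IntermediateField.adjoin_rootSet_isSplittingField hsplits
  haveI : FiniteDimensional k L := Polynomial.IsSplittingField.finiteDimensional L f
  haveI : IsGalois k L := by haveI := hSF; exact IsGalois.of_separable_splitting_field hsep
  have hcardAut : Fintype.card (L ≃ₐ[k] L) = n.factorial := by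
    rw [← Nat.card_eq_fintype_card, IsGalois.card_aut_eq_finrank]
    exact hgal
  -- roots are permuted
  have haev : ∀ (σ : L ≃ₐ[k] L) (i : Fin n), ∃ j : Fin n, σ (ρ i) = ρ j := by
    intro σ i
    have h0 : Polynomial.aeval (rc i) f = 0 := by
      rw [Polynomial.aeval_def, ← Polynomial.eval_map, hrC, Polynomial.eval_prod]
      apply Finset.prod_eq_zero (Finset.mem_univ i)
      simp
    have h1 : Polynomial.aeval (ρ i) f = 0 := by
      have h := Polynomial.aeval_algHom_apply L.val (ρ i) f
      have h2 : L.val (Polynomial.aeval (ρ i) f) = 0 := by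
        rw [← h]; exact h0
      exact Subtype.ext h2
    have h4 : Polynomial.aeval (σ (ρ i)) f = 0 := by
      have h := Polynomial.aeval_algHom_apply σ (ρ i) f
      rw [h, h1, map_zero]
    have h5 : Polynomial.aeval ((σ (ρ i) : ℂ)) f = 0 := by
      have h := Polynomial.aeval_algHom_apply L.val (σ (ρ i)) f
      rw [show ((σ (ρ i) : ℂ)) = L.val (σ (ρ i)) from rfl, h, h4, map_zero]
    rw [Polynomial.aeval_def, ← Polynomial.eval_map, hrC, Polynomial.eval_prod] at h5
    obtain ⟨j, -, hj⟩ := Finset.prod_eq_zero_iff.mp h5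
    simp only [Polynomial.eval_sub, Polynomial.eval_X, Polynomial.eval_C, sub_eq_zero] at hj
    exact ⟨j, Subtype.ext hj⟩
  set P : (L ≃ₐ[k] L) → Fin n → Fin n := fun σ i => Classical.choose (haev σ i) with hPdef
  have hP : ∀ σ i, σ (ρ i) = ρ (P σ i) := fun σ i => Classical.choose_spec (haev σ i)
  have hPinj : ∀ σ, Function.Injective (P σ) := by
    intro σ i j h
    apply hρinj; apply σ.injective
    rw [hP σ i, hP σ j, h]
  set Φ : (L ≃ₐ[k] L) → Equiv.Perm (Fin n) := fun σ =>
    Equiv.ofBijective (P σ) (Finite.injective_iff_bijective.mp (hPinj σ)) with hΦdef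
  have hΦinj : Function.Injective Φ := by
    intro σ τ h
    have hagree : ∀ i, σ (ρ i) = τ (ρ i) := by
      intro i
      rw [hP σ i, hP τ i]
      have : P σ i = P τ i := by
        have := congrArg (fun e => e i) (congrArg Equiv.toFun h)
        exact this
      rw [this]
    have : σ.toAlgHom = τ.toAlgHom := by
      apply IntermediateField.algHom_ext_of_eq_adjoin (hS := hLdef)
      rintro x ⟨i, rfl⟩
      exact hagree i
    exact AlgEquiv.coe_algHom_injective this
  have hΦsurj : Function.Surjective Φ := by
    have hbij : Function.Bijective Φ := by
      rw [Fintype.bijective_iff_injective_and_card]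
      exact ⟨hΦinj, by rw [hcardAut, Fintype.card_perm, Fintype.card_fin]⟩
    exact hbij.2
  -- KEY contradiction lemma
  have key : ∀ T : Finset (Fin n), T.Nonempty → ∀ c : ℂ, c ∈ L →
      c ^ 2 = ∏ i ∈ T, rc i → False := by
    intro T hT c hcL hc2
    by_cases h0T : i0 ∈ T
    · obtain ⟨y, hy⟩ := hreal c hcL
      have hprod : (∏ i ∈ T, rc i) = (((∏ i ∈ T, r i : ℝ)) : ℂ) := by
        rw [hrcdef]; push_cast; rfl
      have hy2 : (y : ℂ) ^ 2 = (((∏ i ∈ T, r i : ℝ)) : ℂ) := by rw [hy, hc2, hprod]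
      have hy2' : y ^ 2 = ∏ i ∈ T, r i := by exact_mod_cast hy2
      have hnegP : ∏ i ∈ T, r i < 0 := by
        rw [← Finset.mul_prod_erase T r h0T]
        apply mul_neg_of_neg_of_pos hneg
        apply Finset.prod_pos
        intro i hi
        exact hrpos i (Finset.ne_of_mem_erase hi)
      nlinarith [sq_nonneg y]
    · obtain ⟨j, hjT⟩ := hT
      have hji0 : j ≠ i0 := fun h => h0T (h ▸ hjT)
      obtain ⟨σ, hσ⟩ := hΦsurj (Equiv.swap i0 j)
      have hswap : ∀ i, P σ i = Equiv.swap i0 j i := by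
        intro i
        have := congrArg (fun (e : Equiv.Perm (Fin n)) => e i) hσ
        exact this
      set cL : ↥L := ⟨c, hcL⟩ with hcLdef
      have hprodρ : ∀ (U : Finset (Fin n)), ((∏ i ∈ U, ρ i : ↥L) : ℂ) = ∏ i ∈ U, rc i := by
        intro U
        rw [show ((∏ i ∈ U, ρ i : ↥L) : ℂ) = L.val (∏ i ∈ U, ρ i) from rfl, map_prod]
        rfl
      have hcL2 : cL ^ 2 = ∏ i ∈ T, ρ i := by
        apply Subtype.ext
        rw [show ((cL ^ 2 : ↥L) : ℂ) = L.val (cL ^ 2) from rfl, map_pow]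
        rw [hprodρ]
        exact hc2
      have hcLne : cL ≠ 0 := by
        intro h
        rw [h] at hcL2
        have hne : (∏ i ∈ T, ρ i) ≠ 0 :=
          Finset.prod_ne_zero_iff.mpr fun i _ hz => hrcne i (congrArg Subtype.val hz)
        exact hne (by rw [← hcL2]; norm_num)
      have hσρ : ∀ i ∈ T, σ (ρ i) = ρ (Equiv.swap i0 j i) := fun i _ => by
        rw [hP σ i, hswap i]
      have hσc2 : (σ cL) ^ 2 = ρ i0 * ∏ i ∈ T.erase j, ρ i := by
        rw [← map_pow, hcL2, map_prod, Finset.prod_congr rfl hσρ,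
          ← Finset.mul_prod_erase T _ hjT, Equiv.swap_apply_right]
        congr 1
        apply Finset.prod_congr rfl
        intro i hi
        have hij : i ≠ j := Finset.ne_of_mem_erase hi
        have hii0 : i ≠ i0 := fun h => h0T (h ▸ Finset.mem_of_mem_erase hi)
        rw [Equiv.swap_apply_of_ne_of_ne hii0 hij]
      have hcL2' : cL ^ 2 = ρ j * ∏ i ∈ T.erase j, ρ i := by
        rw [hcL2, ← Finset.mul_prod_erase T ρ hjT]
      set d : ↥L := σ cL * cL⁻¹ * ρ j with hddef
      have hd2 : d ^ 2 = ρ i0 * ρ j := by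
        have hinv : cL⁻¹ * cL = 1 := inv_mul_cancel₀ hcLne
        have hstep : d ^ 2 * cL ^ 2 = (ρ i0 * ρ j) * cL ^ 2 := by
          calc d ^ 2 * cL ^ 2 = (σ cL) ^ 2 * ρ j ^ 2 * (cL⁻¹ * cL) ^ 2 := by
                rw [hddef]; ring
          _ = (σ cL) ^ 2 * ρ j ^ 2 := by rw [hinv]; ring
          _ = (ρ i0 * ∏ i ∈ T.erase j, ρ i) * ρ j ^ 2 := by rw [hσc2]
          _ = (ρ i0 * ρ j) * (ρ j * ∏ i ∈ T.erase j, ρ i) := by ring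
          _ = (ρ i0 * ρ j) * cL ^ 2 := by rw [← hcL2']
        exact mul_right_cancel₀ (pow_ne_zero 2 hcLne) hstep
      obtain ⟨y, hy⟩ := hreal (d : ℂ) d.2
      have hyc : (y : ℂ) ^ 2 = ((r i0 * r j : ℝ) : ℂ) := by
        rw [hy]
        calc ((d : ℂ)) ^ 2 = ((d ^ 2 : ↥L) : ℂ) := by
              rw [show ((d ^ 2 : ↥L) : ℂ) = L.val (d ^ 2) from rfl, map_pow]; rfl
        _ = ((ρ i0 * ρ j : ↥L) : ℂ) := by rw [hd2]
        _ = rc i0 * rc j := rfl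
        _ = ((r i0 * r j : ℝ) : ℂ) := by rw [hrcdef]; push_cast; rfl
      have hy2 : y ^ 2 = r i0 * r j := by exact_mod_cast hyc
      nlinarith [sq_nonneg y, mul_neg_of_neg_of_pos hneg (hrpos j hji0)]
  -- the tower over L
  have hFm : ∀ m : ℕ, m ≤ n →
      FiniteDimensional ↥L ↥(IntermediateField.adjoin ↥L (s '' {i : Fin n | (i : ℕ) < m})) ∧
      Module.finrank ↥L ↥(IntermediateField.adjoin ↥L (s '' {i : Fin n | (i : ℕ) < m}))
        = 2 ^ m := by
    intro m
    induction m with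
    | zero =>
      intro _
      have hempty : {i : Fin n | (i : ℕ) < 0} = (∅ : Set (Fin n)) := by
        ext i; simp
      rw [hempty, Set.image_empty, IntermediateField.adjoin_empty]
      constructor
      · exact Module.finite_of_finrank_pos (by rw [IntermediateField.finrank_bot]; norm_num)
      · rw [IntermediateField.finrank_bot]; norm_num
    | succ m IH =>
      intro hm1
      have hm : m < n := by omega
      obtain ⟨hfdprev, hrkprev⟩ := IH (by omega)
      set im : Fin n := ⟨m, hm⟩ with himdef
      set Sm : Set ℂ := s '' {i : Fin n | (i : ℕ) < m} with hSmdef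
      set prev : IntermediateField ↥L ℂ := IntermediateField.adjoin ↥L Sm with hprevdef
      set x : ℂ := s im with hxdef
      -- the new set is an insert
      have hsetins : {i : Fin n | (i : ℕ) < m + 1} = insert im {i : Fin n | (i : ℕ) < m} := by
        ext i
        simp only [Set.mem_setOf_eq, Set.mem_insert_iff]
        constructor
        · intro h
          rcases Nat.lt_succ_iff_lt_or_eq.mp h with h | h
          · exact Or.inr h
          · exact Or.inl (Fin.ext h)
        · rintro (rfl | h)
          · exact Nat.lt_succ_self m
          · exact Nat.lt_succ_of_lt h
      -- x is not in prev
      have hxnot : x ∉ prev := by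
        intro hxmem
        set tF : Finset (Fin n) := Finset.univ.filter (fun i : Fin n => (i : ℕ) < m) with htFdef
        have htFcoe : (↑tF : Set (Fin n)) = {i : Fin n | (i : ℕ) < m} := by
          ext i; simp [htFdef]
        have hrange : Set.range (algebraMap ↥L ℂ) = (L.toSubfield : Set ℂ) :=
          Subtype.range_val
        have hclos : x ∈ Subfield.closure (↑L.toSubfield ∪ s '' ↑tF) := by
          have h1 : x ∈ (IntermediateField.adjoin ↥L Sm).toSubfield := hxmem
          rw [IntermediateField.adjoin_toSubfield, hrange] at h1
          rw [htFcoe, ← hSmdef]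
          exact h1
        have hsq : ∀ i ∈ tF, (s i) ^ 2 ∈ L.toSubfield := by
          intro i _
          rw [hs i]
          exact hmemL i
        have hx2 : x ^ 2 ∈ L.toSubfield := by
          rw [hxdef, hs im]; exact hmemL im
        obtain ⟨S, hStF, hcmem⟩ := kummer_lemma L.toSubfield two_ne_zero s tF hsq x hx2 hclos
        have himS : im ∉ S := by
          intro h
          have := hStF h
          rw [htFdef] at this
          simp [himdef] at this
        set c : ℂ := x * ∏ i ∈ S, s i with hcdef
        have hc2 : c ^ 2 = ∏ i ∈ insert im S, rc i := by
          rw [Finset.prod_insert himS, hcdef, mul_pow, ← Finset.prod_pow]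
          rw [hxdef, hs im]
          congr 1
          exact Finset.prod_congr rfl fun i _ => hs i
        exact key (insert im S) ⟨im, Finset.mem_insert_self im S⟩ c hcmem hc2
      -- rc im lives in prev
      have hrcmem : rc im ∈ prev := by
        have : rc im = algebraMap ↥L ℂ (ρ im) := rfl
        rw [this]
        exact prev.algebraMap_mem (ρ im)
      -- minimal polynomial of x over prev has degree 2
      have hint : IsIntegral ↥prev x := by
        refine ⟨X ^ 2 - C (⟨rc im, hrcmem⟩ : ↥prev), Polynomial.monic_X_pow_sub_C _ (by norm_num), ?_⟩
        rw [← Polynomial.aeval_def]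
        rw [map_sub, map_pow, Polynomial.aeval_X, Polynomial.aeval_C]
        rw [show (algebraMap ↥prev ℂ) (⟨rc im, hrcmem⟩ : ↥prev) = rc im from rfl,
          hxdef, hs im]
        ring
      have hmin2 : (minpoly ↥prev x).natDegree = 2 := by
        have hdvd : minpoly ↥prev x ∣ X ^ 2 - C (⟨rc im, hrcmem⟩ : ↥prev) := by
          apply minpoly.dvd
          rw [map_sub, map_pow, Polynomial.aeval_X, Polynomial.aeval_C]
          rw [show (algebraMap ↥prev ℂ) (⟨rc im, hrcmem⟩ : ↥prev) = rc im from rfl,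
            hxdef, hs im]
          ring
        have hqne : (X ^ 2 - C (⟨rc im, hrcmem⟩ : ↥prev)) ≠ 0 :=
          (Polynomial.monic_X_pow_sub_C _ (by norm_num : 2 ≠ 0)).ne_zero
        have hle : (minpoly ↥prev x).natDegree ≤ 2 := by
          have := Polynomial.natDegree_le_of_dvd hdvd hqne
          rwa [Polynomial.natDegree_X_pow_sub_C] at this
        have hge : 0 < (minpoly ↥prev x).natDegree := minpoly.natDegree_pos hint
        have hne1 : (minpoly ↥prev x).natDegree ≠ 1 := by
          intro h1
          have hxrange : x ∈ (algebraMap ↥prev ℂ).range := by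
            rw [← minpoly.natDegree_eq_one_iff]
            exact h1
          obtain ⟨y, hy⟩ := hxrange
          exact hxnot (hy ▸ y.2)
        omega
      haveI hfdstep : FiniteDimensional ↥prev ↥(IntermediateField.adjoin ↥prev {x}) :=
        IntermediateField.adjoin.finiteDimensional hint
      have hrkstep : Module.finrank ↥prev ↥(IntermediateField.adjoin ↥prev {x}) = 2 := by
        rw [← hmin2]
        exact IntermediateField.adjoin.finrank hint
      -- assemble
      have hadj : IntermediateField.adjoin ↥L (s '' {i : Fin n | (i : ℕ) < m + 1}) =
          (IntermediateField.adjoin ↥prev {x}).restrictScalars ↥L := by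
        rw [hsetins, Set.image_insert_eq, hprevdef, IntermediateField.adjoin_adjoin_left,
          Set.union_singleton, ← hxdef, ← hSmdef]
      rw [hadj]
      constructor
      · have : FiniteDimensional ↥L ↥(IntermediateField.adjoin ↥prev {x}) :=
          FiniteDimensional.trans ↥L ↥prev ↥(IntermediateField.adjoin ↥prev {x})
        exact this
      · have hmul : Module.finrank ↥L ↥prev *
            Module.finrank ↥prev ↥(IntermediateField.adjoin ↥prev {x}) =
            Module.finrank ↥L ↥(IntermediateField.adjoin ↥prev {x}) :=
          Module.finrank_mul_finrank _ _ _
        have : Module.finrank ↥L ↥((IntermediateField.adjoin ↥prev {x}).restrictScalars ↥L) =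
            Module.finrank ↥L ↥(IntermediateField.adjoin ↥prev {x}) := rfl
        rw [this, ← hmul, hrkprev, hrkstep]
        ring
  -- conclusion
  have hLle : L ≤ IntermediateField.adjoin k (Set.range s) := by
    rw [hLdef]
    apply IntermediateField.adjoin_le_iff.mpr
    rintro _ ⟨i, rfl⟩
    have h1 : rc i = (s i) ^ 2 := (hs i).symm
    rw [h1]
    exact pow_mem (IntermediateField.subset_adjoin k (Set.range s) (Set.mem_range_self i)) 2
  have hKeq : IntermediateField.adjoin k (Set.range s) =
      (IntermediateField.adjoin ↥L (Set.range s)).restrictScalars k := by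
    rw [IntermediateField.restrictScalars_adjoin]
    apply le_antisymm
    · exact IntermediateField.adjoin.mono _ _ _ Set.subset_union_right
    · apply IntermediateField.adjoin_le_iff.mpr
      rintro z (hz | hz)
      · exact hLle hz
      · exact IntermediateField.subset_adjoin _ _ hz
  have hrange_s : s '' {i : Fin n | (i : ℕ) < n} = Set.range s := by
    rw [show {i : Fin n | (i : ℕ) < n} = Set.univ from by ext i; simp [i.isLt], Set.image_univ]
  obtain ⟨hfdK, hrkK⟩ := hFm n le_rfl
  rw [hrange_s] at hfdK hrkK
  rw [hKeq]
  have hmulfin : Module.finrank k ↥L *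
      Module.finrank ↥L ↥(IntermediateField.adjoin ↥L (Set.range s)) =
      Module.finrank k ↥((IntermediateField.adjoin ↥L (Set.range s)).restrictScalars k) :=
    Module.finrank_mul_finrank k ↥L ↥(IntermediateField.adjoin ↥L (Set.range s))
  rw [← hmulfin, hgal, hrkK, mul_comm]
end

section
/- Let β be a real sixth root of 2 and ω₃ a primitive cube root of unity. Then α = β + 3ω₃β is an algebraic number of degree 12 over Q whose conjugates span a 2-dimensional Q-vector space, and its minimal polynomial over Q is y¹² + 572y⁶ + 470596. -/
open Polynomial

lemma irr6' : Irreducible (X ^ 6 - C (2:ℚ)) := by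
  have hm : (X ^ 6 - C (2:ℤ)).Monic := by monicity!
  have nd6 : (X ^ 6 - C (2:ℤ)).natDegree = 6 := by compute_degree!
  have hz : Irreducible (X ^ 6 - C (2:ℤ)) := by
    refine (hm.isEisensteinAt_of_mem_of_notMem (𝓟 := Ideal.span {(2:ℤ)}) ?_ ?_ ?_).irreducible
      ?_ hm.isPrimitive ?_
    · rw [Ne, Ideal.span_singleton_eq_top]; decide
    · intro n hn
      rw [nd6] at hn
      interval_cases n <;> simp [coeff_X_pow, Ideal.mem_span_singleton]
    · rw [Ideal.span_singleton_pow, Ideal.mem_span_singleton]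
      simp [coeff_X_pow]
    · exact (Ideal.span_singleton_prime (by norm_num)).mpr Int.prime_two
    · rw [nd6]; norm_num
  have := (hm.irreducible_iff_irreducible_map_fraction_map (K := ℚ)).mp hz
  rw [show (C (2:ℚ)) = (2 : ℚ[X]) from map_ofNat C 2]
  simpa using this

/-- An explicit algebraic number attaining `d_max(2) = 12`: let `β` be the real
sixth root of `2` and `ω` a primitive cube root of unity.  Then
`α = β + 3ωβ` has minimal polynomial `y¹² + 572y⁶ + 470596` over `ℚ`, degree
`12`, and its conjugates span a `ℚ`-vector space of dimension `2`. -/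
theorem stmt_10 (ω : ℂ) (hω : IsPrimitiveRoot ω 3)
    (β : ℂ) (hβ : β = ((2 : ℝ) ^ ((6 : ℝ)⁻¹) : ℝ))
    (α : ℂ) (hα : α = β + 3 * ω * β) :
    minpoly ℚ α = X ^ 12 + C (572 : ℚ) * X ^ 6 + C (470596 : ℚ) ∧
    (minpoly ℚ α).natDegree = 12 ∧
    Module.finrank ℚ (Submodule.span ℚ ((minpoly ℚ α).rootSet ℂ)) = 2 := by
  -- basic facts about ω and β
  have hω3 : ω ^ 3 = 1 := hω.pow_eq_one
  have hωne : ω ≠ 1 := hω.ne_one (by norm_num)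
  have hω2 : ω ^ 2 + ω + 1 = 0 := by
    rcases mul_eq_zero.mp (show (ω - 1) * (ω ^ 2 + ω + 1) = 0 by linear_combination hω3) with h | h
    · exact absurd (by linear_combination h) hωne
    · exact h
  have him : ω.im ≠ 0 := by
    intro h
    have hre := congrArg Complex.re hω2
    simp [pow_two, Complex.mul_re, h] at hre
    nlinarith [sq_nonneg (ω.re + 1/2)]
  have hβ6 : β ^ 6 = 2 := by
    have : ((2 : ℝ) ^ ((6 : ℝ)⁻¹)) ^ (6:ℕ) = 2 := by
      rw [← Real.rpow_natCast ((2:ℝ) ^ ((6:ℝ)⁻¹)) 6, ← Real.rpow_mul (by norm_num)]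
      norm_num
    rw [hβ, ← Complex.ofReal_pow, this, Complex.ofReal_ofNat]
  have hβ0 : β ≠ 0 := by
    intro h
    rw [h] at hβ6
    norm_num at hβ6
  -- the polynomial p
  set p : ℚ[X] := X ^ 12 + C (572 : ℚ) * X ^ 6 + C (470596 : ℚ) with hpdef
  have hpm : p.Monic := by rw [hpdef]; monicity!
  have hpd : p.natDegree = 12 := by rw [hpdef]; compute_degree!
  have hpne : p ≠ 0 := hpm.ne_zero
  have hα6 : α ^ 6 = -646 - 720 * ω := by
    rw [hα]
    linear_combination (1+3*ω)^6 * hβ6 + (1458*ω^4 + 1458*ω^3 - 486*ω^2 + 108*ω + 648) * hω2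
  have haeval : aeval α p = 0 := by
    rw [hpdef]
    simp only [map_add, map_mul, map_pow, aeval_X, aeval_C, map_ofNat]
    push_cast
    linear_combination (α^6 + (-646-720*ω) + 572) * hα6 + 518400 * hω2
  have hint : IsIntegral ℚ α := ⟨p, hpm, by simpa [aeval_def] using haeval⟩
  have hdvd : minpoly ℚ α ∣ p := minpoly.dvd ℚ α haeval
  -- α generates a field of degree divisible by 6
  set K : IntermediateField ℚ ℂ := IntermediateField.adjoin ℚ {α} with hKdef
  have hαK : α ∈ K := IntermediateField.mem_adjoin_simple_self ℚ α
  have hωK : ω ∈ K := by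
    have he : ω = (((-1)/720 : ℚ) : ℂ) * α ^ 6 + (((-646)/720 : ℚ) : ℂ) := by
      push_cast
      linear_combination (1/720 : ℂ) * hα6
    have hc1 : (((-1)/720 : ℚ) : ℂ) ∈ K := by
      simpa using K.algebraMap_mem ((-1)/720 : ℚ)
    have hc2 : (((-646)/720 : ℚ) : ℂ) ∈ K := by
      simpa using K.algebraMap_mem ((-646)/720 : ℚ)
    rw [he]
    exact K.add_mem (K.mul_mem hc1 (pow_mem hαK 6)) hc2
  have h13 : (1 + 3*ω) ≠ 0 := by
    intro h
    have : ω = -1/3 := by linear_combination h/3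
    rw [this] at hω3
    norm_num at hω3
  have hβK : β ∈ K := by
    have he : β = α * (1 + 3*ω)⁻¹ := by
      field_simp
      linear_combination -hα
    rw [he]
    refine K.mul_mem hαK (K.inv_mem (K.add_mem K.one_mem (K.mul_mem ?_ hωK)))
    have := K.algebraMap_mem (3:ℚ)
    simpa using this
  have hβint : IsIntegral ℚ β := ⟨X ^ 6 - C (2:ℚ), by monicity!, by
    simp [aeval_def, hβ6]⟩
  have hmβ : minpoly ℚ β = X ^ 6 - C (2:ℚ) := by
    refine (minpoly.eq_of_irreducible_of_monic irr6' ?_ (by monicity!)).symm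
    simp [hβ6]
  have hLβ6 : Module.finrank ℚ (IntermediateField.adjoin ℚ {β}) = 6 := by
    rw [IntermediateField.adjoin.finrank hβint, hmβ]
    compute_degree!
  have hle : IntermediateField.adjoin ℚ {β} ≤ K := by
    rw [IntermediateField.adjoin_le_iff]
    simpa using hβK
  haveI : FiniteDimensional ℚ K := IntermediateField.adjoin.finiteDimensional hint
  have hdK : Module.finrank ℚ K = (minpoly ℚ α).natDegree :=
    IntermediateField.adjoin.finrank hint
  have hdvd6 : 6 ∣ Module.finrank ℚ K :=
    ⟨IntermediateField.relfinrank (IntermediateField.adjoin ℚ {β}) K, by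
      rw [← IntermediateField.finrank_bot_mul_relfinrank hle, hLβ6]⟩
  have hne6 : Module.finrank ℚ K ≠ 6 := by
    intro h
    have heqf : IntermediateField.adjoin ℚ {β} = K :=
      IntermediateField.eq_of_le_of_finrank_eq hle (by rw [hLβ6, h])
    have hωL : ω ∈ IntermediateField.adjoin ℚ {β} := heqf ▸ hωK
    -- adjoin ℚ {β} consists of real numbers
    let Rf : IntermediateField ℚ ℂ :=
      { Complex.ofRealHom.fieldRange with
        algebraMap_mem' := fun q => ⟨(q:ℝ), by simp⟩ }
    have hRf : IntermediateField.adjoin ℚ {β} ≤ Rf := by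
      rw [IntermediateField.adjoin_le_iff]
      intro x hx
      rcases hx with rfl
      exact ⟨(2 : ℝ) ^ ((6 : ℝ)⁻¹), hβ.symm⟩
    obtain ⟨r, hr⟩ := hRf hωL
    apply him
    rw [← hr]
    exact Complex.ofReal_im r
  have hd12 : (minpoly ℚ α).natDegree = 12 := by
    have hle12 : (minpoly ℚ α).natDegree ≤ 12 := by
      have := Polynomial.natDegree_le_of_dvd hdvd hpne
      omega
    have hpos : 0 < (minpoly ℚ α).natDegree := minpoly.natDegree_pos hint
    rw [hdK] at hdvd6 hne6
    obtain ⟨k, hk⟩ := hdvd6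
    omega
  -- minpoly = p
  have heq : minpoly ℚ α = p := by
    obtain ⟨c, hc⟩ := hdvd
    have hmne : minpoly ℚ α ≠ 0 := minpoly.ne_zero hint
    have hc0 : c ≠ 0 := by
      rintro rfl
      rw [mul_zero] at hc
      exact hpne hc
    have hdegs : c.natDegree = 0 := by
      have := congrArg natDegree hc
      rw [natDegree_mul hmne hc0, hpd, hd12] at this
      omega
    have hcC : c = C (c.coeff 0) := eq_C_of_natDegree_eq_zero hdegs
    have hlc : c.coeff 0 = 1 := by
      have := congrArg leadingCoeff hc
      rw [leadingCoeff_mul, (minpoly.monic hint).leadingCoeff, hpm.leadingCoeff, one_mul,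
        hcC] at this
      simpa using this.symm
    rw [hc, hcC, hlc, map_one, mul_one]
  refine ⟨heq, hd12, ?_⟩
  -- the span of the roots
  rw [heq]
  have hsp : Submodule.span ℚ (p.rootSet ℂ) = Submodule.span ℚ ({β, ω*β} : Set ℂ) := by
    -- the second root generator
    have hα'6 : (-2*β - 3*ω*β) ^ 6 = 74 + 720 * ω := by
      linear_combination ((-2-3*ω)^6) * hβ6 + (54 + 378*ω + 3888*ω^2 + 4374*ω^3 + 1458*ω^4) * hω2
    have hα'root : aeval (-2*β - 3*ω*β) p = 0 := by
      rw [hpdef]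
      simp only [map_add, map_mul, map_pow, aeval_X, aeval_C, map_ofNat]
      push_cast
      linear_combination ((-2*β - 3*ω*β)^6 + (74+720*ω) + 572) * hα'6 + 518400 * hω2
    have hαmem : α ∈ p.rootSet ℂ := by
      rw [Polynomial.mem_rootSet]
      exact ⟨hpne, haeval⟩
    have hα'mem : (-2*β - 3*ω*β) ∈ p.rootSet ℂ := by
      rw [Polynomial.mem_rootSet]
      exact ⟨hpne, hα'root⟩
    apply le_antisymm
    · rw [Submodule.span_le]
      intro y hy
      rw [Polynomial.mem_rootSet] at hy
      have hy3 : y^12 + 572*y^6 + 470596 = 0 := by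
        have := hy.2
        rw [hpdef] at this
        simp only [map_add, map_mul, map_pow, aeval_X, aeval_C, map_ofNat] at this
        push_cast at this
        linear_combination this
      have hfac : (y^6 - (-646-720*ω)) * (y^6 - (74+720*ω)) = 0 := by
        linear_combination hy3 - 518400 * hω2
      have hmem : ∀ a b : ℚ, (a:ℂ) * β + (b:ℂ) * (ω*β) = y →
          y ∈ (Submodule.span ℚ ({β, ω*β} : Set ℂ) : Set ℂ) := by
        intro a b hab
        refine Submodule.mem_span_pair.mpr ⟨a, b, ?_⟩
        rw [Algebra.smul_def, Algebra.smul_def]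
        push_cast
        exact hab
      rcases mul_eq_zero.mp hfac with h | h
      · have hsix : (y - α)*(y + α)*(y - ω*α)*(y + ω*α)*(y - ω^2*α)*(y + ω^2*α) = 0 := by
          linear_combination h - hα6 +
            (α^6*(1 - ω + ω^3 - ω^4) + y^2*α^4*(ω^2 - ω^3 + ω^4) + y^4*α^2*(-1 + ω - ω^2)) * hω2
        rcases mul_eq_zero.mp hsix with h6 | h6
        rotate_left
        · exact hmem (-2) 1 (by linear_combination -h6 + ω^2*hα + (-2 + 3*ω)*β*hω2)
        rcases mul_eq_zero.mp h6 with h6 | h6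
        rotate_left
        · exact hmem 2 (-1) (by linear_combination -h6 - ω^2*hα + (2 - 3*ω)*β*hω2)
        rcases mul_eq_zero.mp h6 with h6 | h6
        rotate_left
        · exact hmem 3 2 (by linear_combination -h6 + ω*hα + 3*β*hω2)
        rcases mul_eq_zero.mp h6 with h6 | h6
        rotate_left
        · exact hmem (-3) (-2) (by linear_combination -h6 - ω*hα + (-3)*β*hω2)
        rcases mul_eq_zero.mp h6 with h6 | h6
        · exact hmem 1 3 (by linear_combination -h6 - hα)
        · exact hmem (-1) (-3) (by linear_combination -h6 + hα)
      · have hsix : (y - (-2*β - 3*ω*β))*(y + (-2*β - 3*ω*β))*(y - ω*(-2*β - 3*ω*β))*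
            (y + ω*(-2*β - 3*ω*β))*(y - ω^2*(-2*β - 3*ω*β))*(y + ω^2*(-2*β - 3*ω*β)) = 0 := by
          linear_combination h - hα'6 +
            ((-2*β - 3*ω*β)^6*(1 - ω + ω^3 - ω^4) + y^2*(-2*β - 3*ω*β)^4*(ω^2 - ω^3 + ω^4)
              + y^4*(-2*β - 3*ω*β)^2*(-1 + ω - ω^2)) * hω2
        rcases mul_eq_zero.mp hsix with h6 | h6
        rotate_left
        · exact hmem 1 (-2) (by linear_combination -h6 + (1 - 3*ω)*β*hω2)
        rcases mul_eq_zero.mp h6 with h6 | h6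
        rotate_left
        · exact hmem (-1) 2 (by linear_combination -h6 + (-1 + 3*ω)*β*hω2)
        rcases mul_eq_zero.mp h6 with h6 | h6
        rotate_left
        · exact hmem (-3) (-1) (by linear_combination -h6 + (-3)*β*hω2)
        rcases mul_eq_zero.mp h6 with h6 | h6
        rotate_left
        · exact hmem 3 1 (by linear_combination -h6 + 3*β*hω2)
        rcases mul_eq_zero.mp h6 with h6 | h6
        · exact hmem (-2) (-3) (by linear_combination -h6)
        · exact hmem 2 3 (by linear_combination -h6)
    · rw [Submodule.span_le]
      have hβS : β ∈ Submodule.span ℚ (p.rootSet ℂ) := by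
        have hb : β = -α - (-2*β - 3*ω*β) := by linear_combination hα
        rw [hb]
        exact Submodule.sub_mem _ (Submodule.neg_mem _ (Submodule.subset_span hαmem))
          (Submodule.subset_span hα'mem)
      intro x hx
      rcases hx with rfl | hx
      · exact hβS
      · rcases hx with rfl
        have hb : ω*β = (3⁻¹ : ℚ) • α - (3⁻¹ : ℚ) • β := by
          rw [Algebra.smul_def, Algebra.smul_def, map_inv₀, map_ofNat]
          linear_combination -hα/3
        rw [hb]
        exact Submodule.sub_mem _ (Submodule.smul_mem _ _ (Submodule.subset_span hαmem))
          (Submodule.smul_mem _ _ hβS)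
  rw [hsp]
  have hli : LinearIndependent ℚ ![β, ω*β] := by
    rw [LinearIndependent.pair_iff]
    intro s t hst
    rw [Algebra.smul_def, Algebra.smul_def, eq_ratCast, eq_ratCast] at hst
    have h1 : (s:ℂ) + (t:ℂ)*ω = 0 := by
      rcases mul_eq_zero.mp (show β * ((s:ℂ) + (t:ℂ)*ω) = 0 by
        linear_combination hst) with h | h
      · exact absurd h hβ0
      · exact h
    have ht : (t:ℝ) * ω.im = 0 := by
      have := congrArg Complex.im h1
      simpa [Complex.add_im, Complex.mul_im] using this
    have ht0 : t = 0 := by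
      rcases mul_eq_zero.mp ht with h | h
      · exact_mod_cast h
      · exact absurd h him
    have hs0 : s = 0 := by
      rw [ht0] at h1
      have hs : (s:ℂ) = 0 := by push_cast at h1; linear_combination h1
      exact_mod_cast hs
    exact ⟨hs0, ht0⟩
  have hrange : ({β, ω*β} : Set ℂ) = Set.range ![β, ω*β] := by
    simp only [Matrix.range_cons, Matrix.range_empty, Set.union_empty, Set.union_singleton]
    exact Set.pair_comm β (ω*β)
  rw [hrange, finrank_span_eq_card hli]
  simp
end
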